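/- arXiv:2407.08904 — 4 statements merged into one kernel-verified Lean document; each statement's English description precedes it below -/
import Mathlib

section
/- If M is an R-proximally smooth closed subset of a Euclidean space (i.e., the nearest-point projection P_M is single-valued on the open R-tube around M), then for any γ ∈ (0, R), the projection P_M is Lipschitz continuous with constant R/(R−γ) on the closed γ-tube {x : dist(x, M) ≤ γ}. -/
open Metric Filter
open scoped RealInnerProductSpace Topology

private lemma young_ineq (A B τ : ℝ) (hτ : 0 < τ) (hA : 0 ≤ A) (hB : 0 ≤ B) :
    A * B ≤ A ^ 2 / (2 * τ) + τ * B ^ 2 / 2 := by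
  have h := sq_nonneg (A - τ * B)
  have h2 : A * B * (2 * τ) ≤ A ^ 2 + τ ^ 2 * B ^ 2 := by nlinarith
  have h3 : A * B ≤ (A ^ 2 + τ ^ 2 * B ^ 2) / (2 * τ) := by
    rw [le_div_iff₀ (by positivity)]; linarith
  have h4 : (A ^ 2 + τ ^ 2 * B ^ 2) / (2 * τ) = A ^ 2 / (2 * τ) + τ * B ^ 2 / 2 := by
    field_simp
  linarith [h4 ▸ h3]

private lemma arith_delta (dx r W T E q : ℝ) (hdx : 0 < dx) (hr : dx < r)
    (hT0 : 0 ≤ T) (hTle : T ≤ r - dx) (hWlb : r - E ≤ W) (hWub : W ≤ r)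
    (hE0 : 0 ≤ E) (hEr : E ≤ r / 2) (hq : q * r = dx) :
    dx ^ 2 - 2 * q * ((dx ^ 2 + W ^ 2 - T ^ 2) / 2) + q ^ 2 * W ^ 2 ≤ r * E := by
  have hrpos : 0 < r := lt_trans hdx hr
  have key : r ^ 2 * (dx ^ 2 - 2 * q * ((dx ^ 2 + W ^ 2 - T ^ 2) / 2) + q ^ 2 * W ^ 2)
      = r ^ 2 * dx ^ 2 - r * dx * (dx ^ 2 + W ^ 2 - T ^ 2) + dx ^ 2 * W ^ 2 := by
    linear_combination ((-r) * (dx ^ 2 + W ^ 2 - T ^ 2) + (q * r + dx) * W ^ 2) * hq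
  have hT2 : T ^ 2 ≤ (r - dx) ^ 2 := pow_le_pow_left₀ hT0 hTle 2
  have step1 : r ^ 2 * dx ^ 2 - r * dx * (dx ^ 2 + W ^ 2 - T ^ 2) + dx ^ 2 * W ^ 2
      ≤ dx * (r - dx) * (r ^ 2 - W ^ 2) := by nlinarith [mul_pos hrpos hdx]
  have hW2 : (r - E) ^ 2 ≤ W ^ 2 := pow_le_pow_left₀ (by linarith) hWlb 2
  have step2 : r ^ 2 - W ^ 2 ≤ 2 * r * E := by nlinarith
  have hdxr : 0 ≤ dx * (r - dx) := by nlinarith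
  have step3 : dx * (r - dx) * (r ^ 2 - W ^ 2) ≤ dx * (r - dx) * (2 * r * E) :=
    mul_le_mul_of_nonneg_left step2 hdxr
  have step4 : dx * (r - dx) * (2 * r * E) ≤ r ^ 2 * (r * E) := by
    nlinarith [sq_nonneg (r - 2 * dx), mul_nonneg (mul_nonneg hrpos.le hrpos.le) hE0]
  have : r ^ 2 * (dx ^ 2 - 2 * q * ((dx ^ 2 + W ^ 2 - T ^ 2) / 2) + q ^ 2 * W ^ 2)
      ≤ r ^ 2 * (r * E) := by rw [key]; linarith
  exact le_of_mul_le_mul_left this (by positivity)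

private lemma arith_budget (dx r τ E ε : ℝ) (hdx : 0 < dx) (hr : 0 < r) (hτ : 0 < τ)
    (hE0 : 0 ≤ E) (hEle : E ≤ ε * τ / (4 * (τ * dx + r))) (hε : 0 < ε) :
    dx * E + r * E / (2 * τ) ≤ ε / 4 := by
  have hG : 0 < τ * dx + r := by positivity
  have h1 : E * (4 * (τ * dx + r)) ≤ ε * τ := by
    rw [le_div_iff₀ (by positivity)] at hEle
    exact hEle
  have h2 : (dx * E + r * E / (2 * τ)) * (4 * τ) ≤ ε * τ := by
    have hh : r * E / (2 * τ) * (4 * τ) = 2 * (r * E) := by field_simp; ring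
    rw [add_mul, hh]
    nlinarith
  have h3 : dx * E + r * E / (2 * τ) ≤ ε * τ / (4 * τ) := by
    rw [le_div_iff₀ (by positivity)]; linarith
  have h4 : ε * τ / (4 * τ) = ε / 4 := by field_simp
  linarith [h4 ▸ h3]

private lemma arith_tau (E2 ε : ℝ) (hE2 : 0 ≤ E2) (hε : 0 < ε) :
    ε / (2 * (1 + E2)) * E2 / 2 ≤ ε / 4 := by
  have h1 : 0 < 1 + E2 := by linarith
  rw [div_mul_eq_mul_div, div_div, div_le_div_iff₀ (by positivity) (by norm_num)]
  nlinarith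

private lemma arith_key2 (dx R μ : ℝ) (hdx : 0 < dx) (hR : dx < R) (hμ : 0 < μ)
    (hμle : μ ≤ (R - dx) / 2) :
    dx / (2 * (R - μ)) ≤ dx / (2 * R) + μ / (2 * dx) := by
  have hr : dx < R - μ := by linarith
  have h1 : 0 < 2 * (R - μ) := by linarith
  have h2 : 0 < 2 * R := by linarith
  have h3 : 0 < 2 * dx := by linarith
  rw [div_add_div _ _ (ne_of_gt h2) (ne_of_gt h3), div_le_div_iff₀ h1 (by positivity)]
  ring_nf
  have hinner : 0 ≤ R ^ 2 - dx ^ 2 - R * μ := by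
    nlinarith [mul_le_mul_of_nonneg_left hμle (by linarith : (0:ℝ) ≤ R)]
  nlinarith [mul_nonneg hμ.le hinner]


private lemma final_arith (A B γ R : ℝ) (hA : 0 ≤ A) (hB : 0 ≤ B) (hγ : 0 < γ) (hγR : γ < R)
    (h : A ^ 2 ≤ γ / (2 * R) * A ^ 2 + γ / (2 * R) * A ^ 2 + A * B) :
    A ≤ R / (R - γ) * B := by
  have hR : 0 < R := lt_trans hγ hγR
  have hq : γ / (2 * R) * (2 * R) = γ := div_mul_cancel₀ _ (by positivity)
  rcases eq_or_lt_of_le hA with h0 | h0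
  · rw [← h0]
    exact mul_nonneg (div_nonneg hR.le (by linarith)) hB
  · rw [div_mul_eq_mul_div, le_div_iff₀ (by linarith : (0:ℝ) < R - γ)]
    have h2 : A ^ 2 * (2 * R) ≤ (γ / (2 * R) * A ^ 2 + γ / (2 * R) * A ^ 2 + A * B) * (2 * R) :=
      mul_le_mul_of_nonneg_right h (by positivity)
    have h3 : (γ / (2 * R) * A ^ 2 + γ / (2 * R) * A ^ 2 + A * B) * (2 * R)
        = 2 * (γ / (2 * R) * (2 * R)) * A ^ 2 + A * B * 2 * R := by ring
    rw [hq] at h3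
    nlinarith [h2, h3, mul_pos h0 h0]



private lemma arith_comb (η η' δ inn s ρ : ℝ) (hsq : η ^ 2 ≤ η' ^ 2 - 2 * δ * (η' * inn) + δ ^ 2)
    (hinn : inn = 1 - s / 2) (hs : s ≤ ρ ^ 2) (hη' : 0 ≤ η') (hδ : 0 ≤ δ) :
    η ^ 2 ≤ η' ^ 2 - 2 * δ * η' * (1 - ρ ^ 2 / 2) + δ ^ 2 := by
  subst hinn
  nlinarith [mul_le_mul_of_nonneg_left hs (mul_nonneg hδ hη')]

private lemma arith_step (η η' δ c ρ : ℝ)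
    (hcomb : η ^ 2 ≤ η' ^ 2 - 2 * δ * η' * (1 - ρ ^ 2 / 2) + δ ^ 2)
    (hup : η ≤ η' + δ) (hη : 0 ≤ η) (hcη' : c ≤ η') (hδ : 0 < δ) (hδc2 : δ ≤ c / 2)
    (hρ0 : 0 ≤ ρ) (hρ1 : ρ ≤ 1) (hc : 0 < c) :
    η + δ * (1 - ρ ^ 2 / 2 - δ / c) ≤ η' := by
  obtain ⟨u, hu⟩ : ∃ u : ℝ, u = 1 - ρ ^ 2 / 2 := ⟨_, rfl⟩
  rw [← hu] at hcomb
  have hρsq1 : ρ ^ 2 ≤ 1 := pow_le_one₀ hρ0 hρ1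
  have hu12 : 1 / 2 ≤ u := by rw [hu]; linarith
  have hu1 : u ≤ 1 := by rw [hu]; nlinarith [sq_nonneg ρ]
  have hA : δ * (2 * η' * u - δ) ≤ (η' - η) * (η' + η) := by nlinarith [hcomb]
  have hcuδ : δ ≤ c * u := by
    have h := mul_le_mul_of_nonneg_left hu12 hc.le
    linarith
  have hsum : η' + η ≤ 2 * η' + δ := by linarith
  have hcuc : c * u ≤ c := by
    have h := mul_le_mul_of_nonneg_left hu1 hc.le
    linarith
  have hkey : (c * u - δ) * (2 * η' + δ) ≤ c * (2 * η' * u - δ) := by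
    have hin : (0:ℝ) ≤ 2 * η' + δ - c - c * u := by linarith
    nlinarith [mul_nonneg hδ.le hin]
  have h6 : (c * u - δ) * (η' + η) ≤ (c * u - δ) * (2 * η' + δ) :=
    mul_le_mul_of_nonneg_left hsum (by linarith)
  have h7 : (δ * (c * u - δ)) * (η' + η) ≤ (c * (η' - η)) * (η' + η) := by
    nlinarith [mul_le_mul_of_nonneg_left h6 hδ.le,
      mul_le_mul_of_nonneg_left hkey hδ.le,
      mul_le_mul_of_nonneg_left hA hc.le]
  have hsumpos : 0 < η' + η := by linarith
  have h8 : δ * (c * u - δ) ≤ c * (η' - η) := le_of_mul_le_mul_right h7 hsumpos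
  have h9 : δ * (1 - ρ ^ 2 / 2 - δ / c) = δ * (c * u - δ) / c := by
    have hcne : c ≠ 0 := ne_of_gt hc
    rw [hu]; field_simp
  have h10 : δ * (c * u - δ) / c ≤ η' - η := by
    rw [div_le_iff₀ hc]; nlinarith [h8]
  rw [h9]; linarith



section ProximallySmoothAux

variable {N : ℕ} {M : Set (EuclideanSpace ℝ (Fin N))} {R : ℝ}
  {P : EuclideanSpace ℝ (Fin N) → EuclideanSpace ℝ (Fin N)}

theorem modulus (hMclosed : IsClosed M) (hR : 0 < R)
    (hP : ∀ x, Metric.infDist x M < R →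
      P x ∈ M ∧ dist (P x) x = Metric.infDist x M ∧
        ∀ y ∈ M, dist y x = Metric.infDist x M → y = P x)
    (x : EuclideanSpace ℝ (Fin N)) (t c ρ : ℝ) (hc : 0 < c) (hρ : 0 < ρ)
    (hKR : ∀ z : EuclideanSpace ℝ (Fin N), dist z x ≤ t → Metric.infDist z M < R) :
    ∃ δ₀ > 0, ∀ y y' : EuclideanSpace ℝ (Fin N), dist y x ≤ t → dist y' x ≤ t →
      c ≤ Metric.infDist y M → c ≤ Metric.infDist y' M → dist y y' ≤ δ₀ →
      ‖(Metric.infDist y M)⁻¹ • (y - P y) - (Metric.infDist y' M)⁻¹ • (y' - P y')‖ ≤ ρ := by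
  by_contra hcon
  push_neg at hcon
  have hsel : ∀ j : ℕ, ∃ y y' : EuclideanSpace ℝ (Fin N), dist y x ≤ t ∧ dist y' x ≤ t ∧
      c ≤ Metric.infDist y M ∧ c ≤ Metric.infDist y' M ∧ dist y y' ≤ ((j : ℝ) + 1)⁻¹ ∧
      ρ < ‖(Metric.infDist y M)⁻¹ • (y - P y) - (Metric.infDist y' M)⁻¹ • (y' - P y')‖ := by
    intro j
    obtain ⟨y, y', h1, h2, h3, h4, h5, h6⟩ := hcon ((j : ℝ) + 1)⁻¹ (by positivity)
    exact ⟨y, y', h1, h2, h3, h4, h5, h6⟩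
  choose Y Y' h1 h2 h3 h4 h5 h6 using hsel
  -- P-values of points in the tube-ball lie in a fixed compact set
  have hPball : ∀ z : EuclideanSpace ℝ (Fin N), dist z x ≤ t →
      P z ∈ M ∩ closedBall x (t + R) := by
    intro z hz
    obtain ⟨hm, hd, _⟩ := hP z (hKR z hz)
    refine ⟨hm, ?_⟩
    rw [mem_closedBall]
    calc dist (P z) x ≤ dist (P z) z + dist z x := dist_triangle _ _ _
    _ ≤ R + t := by
        have := hKR z hz
        rw [hd] at *
        exact add_le_add this.le hz
    _ = t + R := by ring
  have hCcomp : IsCompact (M ∩ closedBall x (t + R)) :=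
    (isCompact_closedBall x (t + R)).of_isClosed_subset
      (hMclosed.inter Metric.isClosed_closedBall) Set.inter_subset_right
  have hKcomp : IsCompact (closedBall x t) := isCompact_closedBall x t
  set S := (closedBall x t) ×ˢ ((closedBall x t) ×ˢ ((M ∩ closedBall x (t + R)) ×ˢ (M ∩ closedBall x (t + R)))) with hS
  have hScomp : IsCompact S := hKcomp.prod (hKcomp.prod (hCcomp.prod hCcomp))
  set u : ℕ → _ := fun j => (Y j, (Y' j, (P (Y j), P (Y' j)))) with hu
  have humem : ∀ j, u j ∈ S := fun j =>
    ⟨mem_closedBall.2 (h1 j), mem_closedBall.2 (h2 j), hPball _ (h1 j), hPball _ (h2 j)⟩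
  obtain ⟨⟨a, a', q, q'⟩, hmemS, φ, hφ, hconv⟩ := hScomp.tendsto_subseq humem
  obtain ⟨haS, ha'S, hqS, hq'S⟩ := hmemS
  have hY : Tendsto (fun j => Y (φ j)) atTop (𝓝 a) := by
    have := (continuous_fst.tendsto _).comp hconv; exact this
  have hY' : Tendsto (fun j => Y' (φ j)) atTop (𝓝 a') := by
    have := ((continuous_fst.comp continuous_snd).tendsto _).comp hconv
    exact this
  have hq : Tendsto (fun j => P (Y (φ j))) atTop (𝓝 q) := by
    have := ((continuous_fst.comp (continuous_snd.comp continuous_snd)).tendsto _).comp hconv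
    exact this
  have hq' : Tendsto (fun j => P (Y' (φ j))) atTop (𝓝 q') := by
    have := ((continuous_snd.comp (continuous_snd.comp continuous_snd)).tendsto _).comp hconv
    exact this
  -- a = a'
  have hdist0 : Tendsto (fun j => dist (Y (φ j)) (Y' (φ j))) atTop (𝓝 (dist a a')) := hY.dist hY'
  have hsmall : Tendsto (fun j : ℕ => ((φ j : ℝ) + 1)⁻¹) atTop (𝓝 0) := by
    have h0 : Tendsto (fun n : ℕ => ((n : ℝ) + 1)⁻¹) atTop (𝓝 0) := by
      simpa [one_div] using (tendsto_one_div_add_atTop_nhds_zero_nat : Tendsto (fun n : ℕ => 1 / ((n : ℝ) + 1)) atTop (𝓝 0))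
    exact h0.comp hφ.tendsto_atTop
  have haa' : a = a' := by
    have hle : dist a a' ≤ 0 :=
      le_of_tendsto_of_tendsto' hdist0 hsmall (fun j => h5 (φ j))
    exact dist_le_zero.1 hle
  -- infDist limits
  have hdY : Tendsto (fun j => Metric.infDist (Y (φ j)) M) atTop (𝓝 (Metric.infDist a M)) :=
    ((Metric.continuous_infDist_pt M).tendsto a).comp hY
  have hdY' : Tendsto (fun j => Metric.infDist (Y' (φ j)) M) atTop (𝓝 (Metric.infDist a' M)) :=
    ((Metric.continuous_infDist_pt M).tendsto a').comp hY'
  have haR : Metric.infDist a M < R := hKR a (mem_closedBall.1 haS)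
  have ha'R : Metric.infDist a' M < R := hKR a' (mem_closedBall.1 ha'S)
  have hac : c ≤ Metric.infDist a M := le_of_tendsto_of_tendsto' tendsto_const_nhds hdY (fun j => h3 (φ j))
  have ha'c : c ≤ Metric.infDist a' M := le_of_tendsto_of_tendsto' tendsto_const_nhds hdY' (fun j => h4 (φ j))
  -- q = P a
  have hqPa : q = P a := by
    have hdq : Tendsto (fun j => dist (P (Y (φ j))) (Y (φ j))) atTop (𝓝 (dist q a)) := hq.dist hY
    have heq : ∀ j, dist (P (Y (φ j))) (Y (φ j)) = Metric.infDist (Y (φ j)) M :=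
      fun j => (hP _ (hKR _ (h1 (φ j)))).2.1
    have : Tendsto (fun j => Metric.infDist (Y (φ j)) M) atTop (𝓝 (dist q a)) := by
      rw [show (fun j => Metric.infDist (Y (φ j)) M) = fun j => dist (P (Y (φ j))) (Y (φ j)) by
        funext j; rw [heq j]]
      exact hdq
    have hdqa : dist q a = Metric.infDist a M := tendsto_nhds_unique this hdY
    exact (hP a haR).2.2 q hqS.1 hdqa
  have hq'Pa : q' = P a' := by
    have hdq : Tendsto (fun j => dist (P (Y' (φ j))) (Y' (φ j))) atTop (𝓝 (dist q' a')) := hq'.dist hY'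
    have heq : ∀ j, dist (P (Y' (φ j))) (Y' (φ j)) = Metric.infDist (Y' (φ j)) M :=
      fun j => (hP _ (hKR _ (h2 (φ j)))).2.1
    have : Tendsto (fun j => Metric.infDist (Y' (φ j)) M) atTop (𝓝 (dist q' a')) := by
      rw [show (fun j => Metric.infDist (Y' (φ j)) M) = fun j => dist (P (Y' (φ j))) (Y' (φ j)) by
        funext j; rw [heq j]]
      exact hdq
    have hdqa : dist q' a' = Metric.infDist a' M := tendsto_nhds_unique this hdY'
    exact (hP a' ha'R).2.2 q' hq'S.1 hdqa
  -- the two normals converge to the same vector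
  have hane : Metric.infDist a M ≠ 0 := ne_of_gt (lt_of_lt_of_le hc hac)
  have ha'ne : Metric.infDist a' M ≠ 0 := ne_of_gt (lt_of_lt_of_le hc ha'c)
  have hn1 : Tendsto (fun j => (Metric.infDist (Y (φ j)) M)⁻¹ • (Y (φ j) - P (Y (φ j)))) atTop
      (𝓝 ((Metric.infDist a M)⁻¹ • (a - q))) :=
    (hdY.inv₀ hane).smul (hY.sub hq)
  have hn2 : Tendsto (fun j => (Metric.infDist (Y' (φ j)) M)⁻¹ • (Y' (φ j) - P (Y' (φ j)))) atTop
      (𝓝 ((Metric.infDist a' M)⁻¹ • (a' - q'))) :=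
    (hdY'.inv₀ ha'ne).smul (hY'.sub hq')
  have hsame : (Metric.infDist a M)⁻¹ • (a - q) = (Metric.infDist a' M)⁻¹ • (a' - q') := by
    rw [hqPa, hq'Pa, haa']
  have hnd : Tendsto (fun j => ‖(Metric.infDist (Y (φ j)) M)⁻¹ • (Y (φ j) - P (Y (φ j)))
      - (Metric.infDist (Y' (φ j)) M)⁻¹ • (Y' (φ j) - P (Y' (φ j)))‖) atTop (𝓝 0) := by
    have := (hn1.sub hn2).norm
    rw [hsame] at this
    simpa using this
  have hρ0 : ρ ≤ 0 := le_of_tendsto_of_tendsto' tendsto_const_nhds hnd (fun j => (h6 (φ j)).le)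
  exact absurd hρ0 (not_le.2 hρ)


set_option maxHeartbeats 2000000 in
theorem polygon (hMclosed : IsClosed M) (hR : 0 < R)
    (hP : ∀ x, Metric.infDist x M < R →
      P x ∈ M ∧ dist (P x) x = Metric.infDist x M ∧
        ∀ y ∈ M, dist y x = Metric.infDist x M → y = P x)
    (x : EuclideanSpace ℝ (Fin N)) (hx0 : 0 < Metric.infDist x M) (r : ℝ)
    (hr1 : Metric.infDist x M < r) (hr2 : r < R) (ε : ℝ) (hε : 0 < ε) :
    ∃ y : EuclideanSpace ℝ (Fin N),
      dist y x ≤ r - Metric.infDist x M ∧ r - ε ≤ Metric.infDist y M := by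
  set dx := Metric.infDist x M with hdx
  set c : ℝ := dx / 2 with hcdef
  set t : ℝ := r - dx with htdef
  have hc : 0 < c := by positivity
  have ht : 0 < t := by simp only [htdef]; linarith
  have hKR : ∀ z : EuclideanSpace ℝ (Fin N), dist z x ≤ t → Metric.infDist z M < R := by
    intro z hz
    have h1 : Metric.infDist z M ≤ dx + dist z x := Metric.infDist_le_infDist_add_dist
    have : Metric.infDist z M ≤ r := by simp only [htdef] at hz; linarith
    linarith
  set ρ : ℝ := min 1 (Real.sqrt (ε / (1 + t))) with hρdef
  have hρpos : 0 < ρ := by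
    apply lt_min one_pos
    apply Real.sqrt_pos.2; positivity
  have hρ1 : ρ ≤ 1 := min_le_left _ _
  have hρsq : ρ ^ 2 ≤ ε / (1 + t) := by
    have h1 : ρ ≤ Real.sqrt (ε / (1 + t)) := min_le_right _ _
    have h2 : ρ ^ 2 ≤ Real.sqrt (ε / (1 + t)) ^ 2 := by
      apply pow_le_pow_left₀ hρpos.le h1
    rwa [Real.sq_sqrt (by positivity : (0:ℝ) ≤ ε / (1 + t))] at h2
  obtain ⟨δ₀, hδ₀pos, hδ₀⟩ := modulus hMclosed hR hP x t c ρ hc hρpos hKR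
  set m : ℝ := min δ₀ (min (c / 2) (ε * c / (2 * t))) with hmdef
  have hm : 0 < m := by
    apply lt_min hδ₀pos; apply lt_min (by positivity); positivity
  obtain ⟨K, hK⟩ := exists_nat_gt (t / m)
  have hKpos : 0 < (K : ℝ) := lt_trans (by positivity) hK
  set δ : ℝ := t / K with hδdef
  have hδpos : 0 < δ := by positivity
  have hδm : δ ≤ m := by
    rw [hδdef, div_le_iff₀ hKpos]
    rw [div_lt_iff₀ hm] at hK
    nlinarith [hK]
  have hδδ₀ : δ ≤ δ₀ := le_trans hδm (min_le_left _ _)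
  have hδc2 : δ ≤ c / 2 := le_trans hδm (le_trans (min_le_right _ _) (min_le_left _ _))
  have hδεc : δ ≤ ε * c / (2 * t) := le_trans hδm (le_trans (min_le_right _ _) (min_le_right _ _))
  have hKδ : (K : ℝ) * δ = t := by
    rw [hδdef]; field_simp
  set σ : ℝ := ρ ^ 2 / 2 + δ / c with hσdef
  have hσ1 : σ ≤ 1 := by
    have h1 : ρ ^ 2 ≤ 1 := pow_le_one₀ hρpos.le hρ1
    have h2 : δ / c ≤ 1 / 2 := by rw [div_le_div_iff₀ hc (by norm_num)]; linarith only [hδc2]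
    simp only [hσdef]; linarith
  have hσ0 : 0 ≤ σ := by positivity
  have htσ : t * σ ≤ ε := by
    have h1 : t * (ρ ^ 2 / 2) ≤ ε / 2 := by
      have : t * ρ ^ 2 ≤ t * (ε / (1 + t)) := by
        apply mul_le_mul_of_nonneg_left hρsq ht.le
      have h2 : t * (ε / (1 + t)) ≤ ε := by
        rw [mul_div_assoc', div_le_iff₀ (by positivity : (0:ℝ) < 1 + t)]
        nlinarith [mul_nonneg ht.le hε.le, hε.le]
      linarith
    have h2 : t * (δ / c) ≤ ε / 2 := by
      have h3 : t * δ ≤ ε * c / 2 := by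
        calc t * δ ≤ t * (ε * c / (2 * t)) := mul_le_mul_of_nonneg_left hδεc ht.le
        _ = ε * c / 2 := by field_simp
      have h4 : t * (δ / c) = t * δ / c := by ring
      rw [h4, div_le_iff₀ hc]
      linarith only [h3]
    simp only [hσdef]; rw [mul_add]; linarith
  clear_value dx c t ρ m δ σ
  -- the discrete flow
  set f : EuclideanSpace ℝ (Fin N) → EuclideanSpace ℝ (Fin N) :=
    fun z => z + δ • ((Metric.infDist z M)⁻¹ • (z - P z)) with hfdef
  set seq : ℕ → EuclideanSpace ℝ (Fin N) := fun k => f^[k] x with hseqdef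
  have hseq0 : seq 0 = x := rfl
  have hseqS : ∀ k, seq (k + 1) = f (seq k) := by
    intro k; simp only [hseqdef, Function.iterate_succ_apply']
  -- unit normal facts
  have hnormn : ∀ z : EuclideanSpace ℝ (Fin N), Metric.infDist z M < R →
      0 < Metric.infDist z M → ‖(Metric.infDist z M)⁻¹ • (z - P z)‖ = 1 := by
    intro z h1 h2
    have hd := (hP z h1).2.1
    have : ‖z - P z‖ = Metric.infDist z M := by
      rw [← dist_eq_norm, dist_comm]; exact hd
    rw [norm_smul, Real.norm_eq_abs, abs_inv, abs_of_pos h2, this, inv_mul_cancel₀ (ne_of_gt h2)]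
  have main : ∀ k : ℕ, k ≤ K →
      dist (seq k) x ≤ k * δ ∧ dx + ((k : ℝ) * δ) * (1 - σ) ≤ Metric.infDist (seq k) M := by
    intro k
    induction k with
    | zero => intro _; constructor
              · simp [hseq0]
              · simp [hseq0, ← hdx]
    | succ k ih =>
      intro hk1
      obtain ⟨ihd, ihD⟩ := ih (Nat.le_of_succ_le hk1)
      set y := seq k with hy
      set η := Metric.infDist y M with hη
      have hkK : (k : ℝ) ≤ (K : ℝ) := by exact_mod_cast Nat.le_of_succ_le hk1
      have hk1K : ((k : ℝ) + 1) ≤ (K : ℝ) := by exact_mod_cast hk1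
      have hdyx : dist y x ≤ t := by
        have : (k : ℝ) * δ ≤ (K : ℝ) * δ := by
          apply mul_le_mul_of_nonneg_right hkK hδpos.le
        rw [hKδ] at this; linarith
      have hηR : η < R := hKR y hdyx
      have hηlb : dx ≤ η := by
        have : 0 ≤ ((k : ℝ) * δ) * (1 - σ) := by
          apply mul_nonneg (by positivity); linarith
        linarith
      have hη0 : 0 < η := lt_of_lt_of_le hx0 hηlb
      set n := (Metric.infDist y M)⁻¹ • (y - P y) with hn
      have hn1 : ‖n‖ = 1 := hnormn y hηR hη0
      have hy' : seq (k + 1) = y + δ • n := by rw [hseqS]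
      set y' := seq (k + 1) with hy'def
      have hdisty'y : dist y' y = δ := by
        rw [hy', dist_eq_norm]
        simp only [add_sub_cancel_left]
        rw [norm_smul, Real.norm_eq_abs, abs_of_pos hδpos, hn1, mul_one]
      have hd'x : dist y' x ≤ ((k : ℝ) + 1) * δ := by
        calc dist y' x ≤ dist y' y + dist y x := dist_triangle _ _ _
        _ ≤ δ + (k : ℝ) * δ := by rw [hdisty'y]; linarith
        _ = ((k : ℝ) + 1) * δ := by ring
      have hd'xt : dist y' x ≤ t := by
        have : ((k : ℝ) + 1) * δ ≤ (K : ℝ) * δ := by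
          apply mul_le_mul_of_nonneg_right hk1K hδpos.le
        rw [hKδ] at this; linarith
      set η' := Metric.infDist y' M with hη'
      have hη'R : η' < R := hKR y' hd'xt
      have hup : η ≤ η' + δ := by
        have h := Metric.infDist_le_infDist_add_dist (x := y) (y := y') (s := M)
        rw [dist_comm] at h
        rw [hη, hη']; rw [hdisty'y] at h; exact h
      have hcη : c ≤ η := by simp only [hcdef]; linarith
      have hcη' : c ≤ η' := by
        have : δ ≤ c := le_trans hδc2 (by linarith)
        simp only [hcdef] at *; linarith
      have hη'0 : 0 < η' := lt_of_lt_of_le hc hcη'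
      set n' := (Metric.infDist y' M)⁻¹ • (y' - P y') with hn'
      have hn'1 : ‖n'‖ = 1 := hnormn y' hη'R hη'0
      have hdistyy' : dist y y' = δ := by rw [dist_comm]; exact hdisty'y
      have hmod : ‖n - n'‖ ≤ ρ :=
        hδ₀ y y' hdyx hd'xt hcη hcη' (le_trans (le_of_eq hdistyy') hδδ₀)
      obtain ⟨hb'M, hb'd, _⟩ := hP y' hη'R
      set b' := P y' with hb'
      have hk1 : η ≤ ‖y - b'‖ := by
        rw [← dist_eq_norm]; exact Metric.infDist_le_dist_of_mem hb'M
      have hyb' : y - b' = (y' - b') - δ • n := by rw [hy']; abel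
      have hnb' : ‖y' - b'‖ = η' := by rw [← dist_eq_norm, dist_comm]; exact hb'd
      have hrepr : y' - b' = η' • n' := by
        rw [hn', smul_smul, mul_inv_cancel₀ (ne_of_gt hη'0), one_smul]
      have hip : ⟪y' - b', n⟫ = η' * ⟪n', n⟫ := by rw [hrepr, real_inner_smul_left]
      have hmod2 : ‖n' - n‖ ^ 2 ≤ ρ ^ 2 := by
        rw [norm_sub_rev] at hmod
        exact pow_le_pow_left₀ (norm_nonneg _) hmod 2
      have hinn : ⟪n', n⟫ = 1 - ‖n' - n‖ ^ 2 / 2 := by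
        have hexp : ‖n' - n‖ ^ 2 = ‖n'‖ ^ 2 - 2 * ⟪n', n⟫ + ‖n‖ ^ 2 := norm_sub_sq_real _ _
        rw [hn1, hn'1] at hexp; linarith only [hexp]
      have hsq : η ^ 2 ≤ η' ^ 2 - 2 * δ * (η' * ⟪n', n⟫) + δ ^ 2 := by
        have h1 : η ^ 2 ≤ ‖y - b'‖ ^ 2 := pow_le_pow_left₀ hη0.le hk1 2
        have h2 : ‖(y' - b') - δ • n‖ ^ 2
            = ‖y' - b'‖ ^ 2 - 2 * ⟪y' - b', δ • n⟫ + ‖δ • n‖ ^ 2 := norm_sub_sq_real _ _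
        have h3 : ⟪y' - b', δ • n⟫ = δ * ⟪y' - b', n⟫ := real_inner_smul_right _ _ _
        have h4 : ‖δ • n‖ = δ := by
          rw [norm_smul, Real.norm_eq_abs, abs_of_pos hδpos, hn1, mul_one]
        rw [hyb'] at h1
        rw [h2, h3, h4, hnb', hip] at h1
        linarith only [h1]
      have hcomb : η ^ 2 ≤ η' ^ 2 - 2 * δ * η' * (1 - ρ ^ 2 / 2) + δ ^ 2 :=
        arith_comb η η' δ _ _ ρ hsq hinn hmod2 hη'0.le hδpos.le
      have hstep : η + δ * (1 - ρ ^ 2 / 2 - δ / c) ≤ η' :=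
        arith_step η η' δ c ρ hcomb hup hη0.le hcη' hδpos hδc2 hρpos.le hρ1 hc
      constructor
      · push_cast; exact hd'x
      · push_cast
        have hσs : δ * (1 - σ) = δ * (1 - ρ ^ 2 / 2 - δ / c) := by
          simp only [hσdef]; ring
        have h2 : dx + ((k : ℝ) * δ) * (1 - σ) + δ * (1 - σ) ≤ η' := by
          rw [hσs]; linarith only [ihD, hstep]
        have h3 : dx + ((k : ℝ) + 1) * δ * (1 - σ) ≤ η' := by linarith only [h2]
        exact h3
  obtain ⟨hd, hD⟩ := main K le_rfl
  refine ⟨seq K, ?_, ?_⟩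
  · rw [hKδ] at hd; exact hd
  · rw [hKδ] at hD
    have h1 : dx + t * (1 - σ) = r - t * σ := by simp only [htdef]; ring
    linarith only [htσ, hD, h1]


set_option maxHeartbeats 1000000 in
theorem hypo (hMclosed : IsClosed M) (hMne : M.Nonempty) (hR : 0 < R)
    (hP : ∀ x, Metric.infDist x M < R →
      P x ∈ M ∧ dist (P x) x = Metric.infDist x M ∧
        ∀ y ∈ M, dist y x = Metric.infDist x M → y = P x)
    (x b : EuclideanSpace ℝ (Fin N)) (hxR : Metric.infDist x M < R) (hb : b ∈ M) :
    ⟪x - P x, b - P x⟫ ≤ (Metric.infDist x M / (2 * R)) * ‖b - P x‖ ^ 2 := by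
  rcases eq_or_lt_of_le (Metric.infDist_nonneg (s := M) (x := x)) with h0 | h0
  · -- boundary case : x ∈ M, P x = x
    have hxM : x ∈ M := by
      apply (hMclosed.mem_iff_infDist_zero hMne).2 h0.symm
    have hxx : x = P x := (hP x hxR).2.2 x hxM (by rw [dist_self, h0])
    rw [← hxx, sub_self, inner_zero_left, ← h0]
    simp
  · -- main case
    apply le_of_forall_pos_le_add
    intro ε hε
    set dx := Metric.infDist x M with hdxdef
    set E2 := ‖b - P x‖ ^ 2 with hE2def
    have hE2nn : 0 ≤ E2 := by positivity
    set μ : ℝ := min ((R - dx) / 2) (ε * dx / (1 + E2)) with hμdef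
    have hμpos : 0 < μ := lt_min (by linarith) (by positivity)
    have hμ1 : μ ≤ (R - dx) / 2 := min_le_left _ _
    have hμ2 : μ ≤ ε * dx / (1 + E2) := min_le_right _ _
    set r : ℝ := R - μ with hrdef
    have hrdx : dx < r := by simp only [hrdef]; linarith
    have hrR : r < R := by simp only [hrdef]; linarith
    have hrpos : 0 < r := lt_trans h0 hrdx
    set τ : ℝ := ε / (2 * (1 + E2)) with hτdef
    have hτpos : 0 < τ := by positivity
    set ε'' : ℝ := min (r / 2) (ε * τ / (4 * (τ * dx + r))) with hε''def
    have hε''pos : 0 < ε'' := lt_min (by positivity) (by positivity)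
    have hε''r : ε'' ≤ r / 2 := min_le_left _ _
    have hε''τ : ε'' ≤ ε * τ / (4 * (τ * dx + r)) := min_le_right _ _
    clear_value μ τ ε''
    obtain ⟨y, hyd, hyD⟩ := polygon hMclosed hR hP x h0 r hrdx hrR ε'' hε''pos
    set a := P x with hadef
    set v := x - a with hvdef
    set w := y - a with hwdef
    set e := b - a with hedef
    set s := Metric.infDist y M with hsdef
    have hvnorm : ‖v‖ = dx := by
      rw [hvdef, ← dist_eq_norm, dist_comm]; exact (hP x hxR).2.1
    have hwv : w - v = y - x := by rw [hwdef, hvdef]; abel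
    have hT : ‖w - v‖ ≤ r - dx := by rw [hwv, ← dist_eq_norm]; exact hyd
    have hWub : ‖w‖ ≤ r := by
      calc ‖w‖ = ‖(w - v) + v‖ := by rw [sub_add_cancel]
      _ ≤ ‖w - v‖ + ‖v‖ := norm_add_le _ _
      _ ≤ (r - dx) + dx := by rw [hvnorm]; linarith [hT]
      _ = r := by ring
    have hsW : s ≤ ‖w‖ := by
      rw [hwdef, ← dist_eq_norm]; exact Metric.infDist_le_dist_of_mem (hP x hxR).1
    have hslb : r - ε'' ≤ s := hyD
    have hspos : 0 < s := by linarith [hε''r, hrpos]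
    have hsb : s ≤ ‖y - b‖ := by
      rw [← dist_eq_norm]; exact Metric.infDist_le_dist_of_mem hb
    -- (i)
    have hyb : y - b = w - e := by rw [hwdef, hedef]; abel
    have hi : 2 * ⟪w, e⟫ ≤ E2 + 2 * r * ε'' := by
      have h1 : s ^ 2 ≤ ‖w - e‖ ^ 2 := by
        rw [← hyb]; exact pow_le_pow_left₀ hspos.le hsb 2
      have h2 : ‖w - e‖ ^ 2 = ‖w‖ ^ 2 - 2 * ⟪w, e⟫ + ‖e‖ ^ 2 := norm_sub_sq_real _ _
      have h3 : (r - ε'') ^ 2 ≤ s ^ 2 := pow_le_pow_left₀ (by linarith [hε''r]) hslb 2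
      have h4 : ‖w‖ ^ 2 ≤ r ^ 2 := pow_le_pow_left₀ (norm_nonneg _) hWub 2
      have h5 : ‖e‖ ^ 2 = E2 := by rw [hE2def, hedef]
      nlinarith [h1, h2, h3, h4, h5]
    -- (ii)
    set q : ℝ := dx / r with hqdef
    have hq : q * r = dx := div_mul_cancel₀ dx (ne_of_gt hrpos)
    have hqnn : 0 ≤ q := by positivity
    have hΔ : ‖v - q • w‖ ^ 2 ≤ r * ε'' := by
      have h1 : ‖v - q • w‖ ^ 2 = ‖v‖ ^ 2 - 2 * ⟪v, q • w⟫ + ‖q • w‖ ^ 2 := norm_sub_sq_real _ _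
      have h2 : ⟪v, q • w⟫ = q * ⟪v, w⟫ := real_inner_smul_right _ _ _
      have h3 : ‖q • w‖ ^ 2 = q ^ 2 * ‖w‖ ^ 2 := by
        rw [norm_smul, Real.norm_eq_abs, abs_of_nonneg hqnn, mul_pow]
      have h4 : ‖w - v‖ ^ 2 = ‖w‖ ^ 2 - 2 * ⟪w, v⟫ + ‖v‖ ^ 2 := norm_sub_sq_real _ _
      have h5 : ⟪v, w⟫ = (dx ^ 2 + ‖w‖ ^ 2 - ‖w - v‖ ^ 2) / 2 := by
        rw [real_inner_comm]; rw [hvnorm] at h4; linarith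
      have h6 := arith_delta dx r ‖w‖ ‖w - v‖ ε'' q h0 hrdx (norm_nonneg _) hT
        (by linarith [hslb, hsW]) hWub hε''pos.le hε''r hq
      rw [h1, h2, h3, h5, hvnorm]
      linarith [h6]
    -- (iii) assemble
    have hiii : ⟪v, e⟫ = q * ⟪w, e⟫ + ⟪v - q • w, e⟫ := by
      simp only [inner_sub_left, real_inner_smul_left]; ring
    have hiv : ⟪v - q • w, e⟫ ≤ r * ε'' / (2 * τ) + τ * E2 / 2 := by
      have h1 : ⟪v - q • w, e⟫ ≤ ‖v - q • w‖ * ‖e‖ := real_inner_le_norm _ _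
      have h2 : ‖v - q • w‖ * ‖e‖ ≤ ‖v - q • w‖ ^ 2 / (2 * τ) + τ * ‖e‖ ^ 2 / 2 :=
        young_ineq _ _ τ hτpos (norm_nonneg _) (norm_nonneg _)
      have h3 : ‖v - q • w‖ ^ 2 / (2 * τ) ≤ r * ε'' / (2 * τ) :=
        (div_le_div_iff_of_pos_right (by positivity)).2 hΔ
      rw [← hE2def] at h2
      linarith [h1, h2, h3]
    have hv5 : q * ⟪w, e⟫ ≤ (dx / (2 * r)) * E2 + dx * ε'' := by
      have hdq : dx / (2 * r) = q / 2 := by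
        rw [hqdef, div_div, mul_comm (2:ℝ) r]
      have h1 : (q / 2) * (2 * ⟪w, e⟫) ≤ (q / 2) * (E2 + 2 * r * ε'') :=
        mul_le_mul_of_nonneg_left hi (by positivity)
      have h2 : (q / 2) * (E2 + 2 * r * ε'') = (q / 2) * E2 + (q * r) * ε'' := by ring
      rw [hq] at h2
      rw [hdq]
      linarith [h1, h2]
    have hbudget : dx * ε'' + r * ε'' / (2 * τ) ≤ ε / 4 :=
      arith_budget dx r τ ε'' ε h0 hrpos hτpos hε''pos.le hε''τ hε
    have htau : τ * E2 / 2 ≤ ε / 4 := by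
      rw [hτdef]; exact arith_tau E2 ε hE2nn hε
    have hmain : ⟪v, e⟫ ≤ (dx / (2 * r)) * E2 + ε / 2 := by
      rw [hiii]; linarith [hiv, hv5, hbudget, htau]
    have hkey2 : dx / (2 * r) ≤ dx / (2 * R) + μ / (2 * dx) := by
      rw [hrdef]; exact arith_key2 dx R μ h0 hxR hμpos hμ1
    have hkey2b : μ / (2 * dx) * E2 ≤ ε / 2 := by
      have h1 : μ * E2 ≤ (ε * dx / (1 + E2)) * E2 :=
        mul_le_mul_of_nonneg_right hμ2 hE2nn
      have h2 : (ε * dx / (1 + E2)) * E2 ≤ ε * dx := by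
        have hp : 0 < 1 + E2 := by linarith
        rw [div_mul_eq_mul_div, div_le_iff₀ hp]
        have h3 : 0 ≤ ε * dx := by positivity
        nlinarith [mul_nonneg h3 hE2nn]
      rw [div_mul_eq_mul_div, div_le_iff₀ (by positivity : (0:ℝ) < 2 * dx)]
      linarith [h1, h2]
    have hfin : (dx / (2 * r)) * E2 ≤ (dx / (2 * R)) * E2 + ε / 2 := by
      have h1 : (dx / (2 * r)) * E2 ≤ (dx / (2 * R) + μ / (2 * dx)) * E2 :=
        mul_le_mul_of_nonneg_right hkey2 hE2nn
      have h2 : (dx / (2 * R) + μ / (2 * dx)) * E2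
          = (dx / (2 * R)) * E2 + μ / (2 * dx) * E2 := by ring
      linarith [hkey2b, h1, h2]
    show ⟪v, e⟫ ≤ dx / (2 * R) * E2 + ε
    linarith [hmain, hfin]


end ProximallySmoothAux

/-- If `M` is an `R`-proximally smooth closed subset of a Euclidean space
(the nearest-point projection `P` is single-valued on the open `R`-tube around `M`),
then for any `γ ∈ (0, R)`, the projection `P` is Lipschitz with constant `R/(R-γ)`
on the closed `γ`-tube `{x : dist(x, M) ≤ γ}`. -/
theorem stmt0 {N : ℕ} (M : Set (EuclideanSpace ℝ (Fin N))) (hMclosed : IsClosed M)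
    (hMne : M.Nonempty) (R : ℝ) (hR : 0 < R)
    (P : EuclideanSpace ℝ (Fin N) → EuclideanSpace ℝ (Fin N))
    (hP : ∀ x, Metric.infDist x M < R →
      P x ∈ M ∧ dist (P x) x = Metric.infDist x M ∧
        ∀ y ∈ M, dist y x = Metric.infDist x M → y = P x) :
    ∀ γ : ℝ, 0 < γ → γ < R →
      ∀ x y, Metric.infDist x M ≤ γ → Metric.infDist y M ≤ γ →
        dist (P x) (P y) ≤ (R / (R - γ)) * dist x y := by
  intro γ hγ0 hγR x y hx hy
  have hxR : Metric.infDist x M < R := lt_of_le_of_lt hx hγR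
  have hyR : Metric.infDist y M < R := lt_of_le_of_lt hy hγR
  have hbx : P x ∈ M := (hP x hxR).1
  have hby : P y ∈ M := (hP y hyR).1
  have h1 := hypo hMclosed hMne hR hP x (P y) hxR hby
  have h2 := hypo hMclosed hMne hR hP y (P x) hyR hbx
  have hrev : ‖P x - P y‖ = ‖P y - P x‖ := norm_sub_rev _ _
  have h2R : (0:ℝ) < 2 * R := by linarith
  have hg1 : (Metric.infDist x M / (2 * R)) * ‖P y - P x‖ ^ 2
      ≤ (γ / (2 * R)) * ‖P y - P x‖ ^ 2 :=
    mul_le_mul_of_nonneg_right ((div_le_div_iff_of_pos_right h2R).2 hx) (by positivity)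
  have hg2 : (Metric.infDist y M / (2 * R)) * ‖P x - P y‖ ^ 2
      ≤ (γ / (2 * R)) * ‖P y - P x‖ ^ 2 := by
    rw [hrev]
    exact mul_le_mul_of_nonneg_right ((div_le_div_iff_of_pos_right h2R).2 hy) (by positivity)
  have hid : ⟪x - P x, P y - P x⟫ - ⟪y - P y, P y - P x⟫
      = ⟪x - y, P y - P x⟫ + ‖P y - P x‖ ^ 2 := by
    rw [← real_inner_self_eq_norm_sq, ← inner_sub_left, ← inner_add_left]
    congr 1
    abel
  have hneg : ⟪y - P y, P x - P y⟫ = -⟪y - P y, P y - P x⟫ := by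
    rw [show P x - P y = -(P y - P x) by abel, inner_neg_right]
  have hcs : -⟪x - y, P y - P x⟫ ≤ ‖x - y‖ * ‖P y - P x‖ := by
    have h := real_inner_le_norm (y - x) (P y - P x)
    rw [show y - x = -(x - y) by abel, inner_neg_left, norm_neg] at h
    linarith
  rw [hneg] at h2
  have hsum : ‖P y - P x‖ ^ 2 ≤ γ / (2 * R) * ‖P y - P x‖ ^ 2
      + γ / (2 * R) * ‖P y - P x‖ ^ 2 + ‖P y - P x‖ * ‖x - y‖ := by
    nlinarith [h1, h2, hg1, hg2, hid, hcs]
  have hfin := final_arith ‖P y - P x‖ ‖x - y‖ γ R (norm_nonneg _) (norm_nonneg _) hγ0 hγR hsum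
  rw [dist_eq_norm, dist_eq_norm, hrev]
  exact hfin
end

section
/- Linear convergence of single-step projected gradient consensus: under the hypotheses of the staying-in-neighborhood lemma with d_k ≡ 0 (i.e., x_{i,k+1} = P_M((1−γ)x_{i,k} + γ∑_j W_{ij}x_{j,k})), the consensus error contracts linearly: ‖x_{k+1} − x̄_{k+1}‖ ≤ ρ₁ ‖x_k − x̄_k‖ for all k ≥ 0, where ρ₁ = (R − Rγ(1−σ₂))/(R − δ) and ρ₁ < 1 since δ < Rγ(1−σ₂). -/
set_option linter.unusedSectionVars false
set_option linter.unusedVariables false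
set_option maxHeartbeats 1000000

open scoped BigOperators

/-- Frobenius norm of a stacked family of vectors. -/
noncomputable def stackNorm {n N : ℕ} (z : Fin n → EuclideanSpace ℝ (Fin N)) : ℝ :=
  Real.sqrt (∑ i, ‖z i‖ ^ 2)

open Metric
open scoped RealInnerProductSpace

section Geo
variable {E : Type*} [NormedAddCommGroup E] [InnerProductSpace ℝ E] [ProperSpace E]
variable {M : Set E} {R : ℝ} {P : E → E}

/-- The closed tube around `M` is compact. -/
lemma tube_compact (hM : IsCompact M) (hne : M.Nonempty) (ρ : ℝ) :
    IsCompact {z : E | infDist z M ≤ ρ} := by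
  obtain ⟨m₀, hm₀⟩ := hne
  have hcl : IsClosed {z : E | infDist z M ≤ ρ} :=
    isClosed_le (continuous_infDist_pt M) continuous_const
  have hb : {z : E | infDist z M ≤ ρ} ⊆ Metric.closedBall m₀ (ρ + 1 + Metric.diam M) := by
    intro z hz
    have hz' : infDist z M < ρ + 1 := lt_of_le_of_lt hz (by linarith)
    obtain ⟨p, hp, hdp⟩ := (Metric.infDist_lt_iff ⟨m₀, hm₀⟩).1 hz'
    have h2 : dist p m₀ ≤ Metric.diam M := Metric.dist_le_diam_of_mem hM.isBounded hp hm₀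
    have := dist_triangle z p m₀
    simp only [Metric.mem_closedBall]
    linarith
  exact (isCompact_closedBall m₀ _).of_isClosed_subset hcl hb

lemma proj_self (hMcl : IsClosed M) (hne : M.Nonempty) (hR : 0 < R)
    (hP : ∀ z, infDist z M < R →
      P z ∈ M ∧ dist (P z) z = infDist z M ∧ ∀ y ∈ M, dist y z = infDist z M → y = P z)
    {p : E} (hp : p ∈ M) : P p = p := by
  have h0 : infDist p M = 0 := infDist_zero_of_mem hp
  have := (hP p (by rw [h0]; exact hR)).2.2 p hp (by simp [h0])
  exact this.symm

/-- Continuity of the projection on a closed tube of radius `< R`. -/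
lemma proj_contOn (hM : IsCompact M) (hne : M.Nonempty) (hR : 0 < R)
    (hP : ∀ z, infDist z M < R →
      P z ∈ M ∧ dist (P z) z = infDist z M ∧ ∀ y ∈ M, dist y z = infDist z M → y = P z)
    {ρ : ℝ} (hρ : ρ < R) :
    ContinuousOn P {z : E | infDist z M ≤ ρ} := by
  intro z hz
  have hzR : infDist z M < R := lt_of_le_of_lt hz hρ
  rw [Metric.continuousWithinAt_iff]
  by_contra hc
  push_neg at hc
  obtain ⟨ε, hε, hcc⟩ := hc
  choose w hw1 hw2 hw3 using fun k : ℕ => hcc (1 / (k + 1)) (by positivity)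
  have hwR : ∀ k, infDist (w k) M < R := fun k => lt_of_le_of_lt (hw1 k) hρ
  have hmem : ∀ k, P (w k) ∈ M := fun k => (hP (w k) (hwR k)).1
  obtain ⟨p, hpM, φ, hφ, hlim⟩ := hM.tendsto_subseq hmem
  have hwz : Filter.Tendsto (fun k => w (φ k)) Filter.atTop (nhds z) := by
    rw [tendsto_iff_dist_tendsto_zero]
    have h1 : ∀ k, dist (w (φ k)) z ≤ 1 / (k + 1) := by
      intro k
      have := hw2 (φ k)
      have hk : (1 : ℝ) / (φ k + 1) ≤ 1 / (k + 1) := by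
        apply one_div_le_one_div_of_le (by positivity)
        have : (k:ℝ) ≤ (φ k : ℝ) := by exact_mod_cast hφ.le_apply
        push_cast
        linarith
      linarith
    have h0 : ∀ k, (0:ℝ) ≤ dist (w (φ k)) z := fun k => dist_nonneg
    refine squeeze_zero h0 h1 ?_
    exact tendsto_one_div_add_atTop_nhds_zero_nat
  -- dist p z = infDist z M
  have hdist : Filter.Tendsto (fun k => dist (P (w (φ k))) (w (φ k))) Filter.atTop
      (nhds (dist p z)) := hlim.dist hwz
  have hinf : Filter.Tendsto (fun k => infDist (w (φ k)) M) Filter.atTop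
      (nhds (infDist z M)) := ((continuous_infDist_pt M).tendsto z).comp hwz
  have heq : (fun k => dist (P (w (φ k))) (w (φ k))) = fun k => infDist (w (φ k)) M := by
    funext k; exact (hP (w (φ k)) (hwR (φ k))).2.1
  rw [heq] at hdist
  have hpz : dist p z = infDist z M := tendsto_nhds_unique hdist hinf
  have hpP : p = P z := (hP z hzR).2.2 p hpM hpz
  -- contradiction with ε ≤ dist (P (w (φ k))) (P z)
  have hεle : ε ≤ dist p (P z) := by
    have : Filter.Tendsto (fun k => dist (P (w (φ k))) (P z)) Filter.atTop
        (nhds (dist p (P z))) := hlim.dist tendsto_const_nhds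
    exact ge_of_tendsto this (Filter.Eventually.of_forall fun k => hw3 (φ k))
  rw [← hpP] at hεle
  simp at hεle
  linarith

end Geo

section Geo2
variable {E : Type*} [NormedAddCommGroup E] [InnerProductSpace ℝ E] [ProperSpace E]
variable {M : Set E} {R : ℝ} {P : E → E}

/-- The ray lemma: the distance to `M` along the normal ray from `P x` through `x`
stays equal to the ray parameter, for parameters `< R`. -/
lemma ray_lemma (hM : IsCompact M) (hne : M.Nonempty) (hR : 0 < R)
    (hP : ∀ z, infDist z M < R →
      P z ∈ M ∧ dist (P z) z = infDist z M ∧ ∀ y ∈ M, dist y z = infDist z M → y = P z)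
    {x : E} (hd : 0 < infDist x M)
    {T : ℝ} (hT1 : infDist x M ≤ T) (hT2 : T < R) :
    T ≤ infDist (P x + (T / infDist x M) • (x - P x)) M := by
  set d : ℝ := infDist x M with hd'
  have hxR : infDist x M < R := lt_of_le_of_lt hT1 hT2
  have ha0 : P x ∈ M := (hP x hxR).1
  have hnx : ‖x - P x‖ = d := by
    rw [← dist_eq_norm, dist_comm]; exact (hP x hxR).2.1
  rcases eq_or_lt_of_le hT1 with hTd | hTd
  · -- T = d : the ray point is x itself
    have : (T / d) • (x - P x) = x - P x := by
      rw [← hTd]; rw [div_self (ne_of_gt hd), one_smul]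
    rw [this]
    have : P x + (x - P x) = x := by abel
    rw [this, ← hTd]
  -- main case d < T
  have hT0 : 0 < T := lt_trans hd hTd
  -- reduce to approximation
  refine le_of_forall_sub_le ?_
  intro θ hθ
  -- constants
  set C₁ : ℝ := (T - d) / d ^ 2 with hC₁
  set C₃ : ℝ := Real.sqrt (2 * T * (T - d) / d) * Real.sqrt (T - d) / d with hC₃
  have hC₁0 : 0 ≤ C₁ := div_nonneg (by linarith) (by positivity)
  have hC₃0 : 0 ≤ C₃ := div_nonneg (mul_nonneg (Real.sqrt_nonneg _) (Real.sqrt_nonneg _)) hd.le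
  set ε : ℝ := min (d / 2) (min 1 (θ / (C₁ + C₃ + 1))) with hε'
  have hε0 : 0 < ε := by
    apply lt_min (by positivity)
    apply lt_min one_pos (by positivity)
  have hεd : ε ≤ d / 2 := min_le_left _ _
  have hε1 : ε ≤ 1 := le_trans (min_le_right _ _) (min_le_left _ _)
  have hεθ : ε ≤ θ / (C₁ + C₃ + 1) := le_trans (min_le_right _ _) (min_le_right _ _)
  -- the claimed approximation bound
  suffices happ : T - (C₁ * ε ^ 2 + C₃ * ε) ≤ infDist (P x + (T / d) • (x - P x)) M by
    have herr : C₁ * ε ^ 2 + C₃ * ε ≤ θ := by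
      have h1 : ε ^ 2 ≤ ε := by nlinarith
      have h2 : C₁ * ε ^ 2 + C₃ * ε ≤ (C₁ + C₃) * ε := by nlinarith
      have h3 : (C₁ + C₃) * ε ≤ (C₁ + C₃) * (θ / (C₁ + C₃ + 1)) := by
        apply mul_le_mul_of_nonneg_left hεθ (by positivity)
      have h4 : (C₁ + C₃) * (θ / (C₁ + C₃ + 1)) ≤ θ := by
        rw [mul_div_assoc']
        rw [div_le_iff₀ (by positivity)]
        nlinarith
      linarith
    linarith
  -- uniform continuity of P on the tube of radius T
  have hK : IsCompact {z : E | infDist z M ≤ T} := tube_compact hM hne T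
  have hUC : UniformContinuousOn P {z : E | infDist z M ≤ T} :=
    hK.uniformContinuousOn_of_continuous (proj_contOn hM hne hR hP hT2)
  rw [Metric.uniformContinuousOn_iff] at hUC
  obtain ⟨η₀, hη₀, hUC⟩ := hUC ε hε0
  -- number of steps
  set KK : ℕ := max 1 (⌈(T - d) / η₀⌉₊ + 1) with hKK'
  have hKK1 : 1 ≤ KK := le_max_left _ _
  have hKKpos : 0 < (KK : ℝ) := by exact_mod_cast lt_of_lt_of_le one_pos hKK1
  set η : ℝ := (T - d) / KK with hη'
  have hη0 : 0 < η := by apply div_pos (by linarith) hKKpos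
  have hηη₀ : η < η₀ := by
    have h1 : (T - d) / η₀ < KK := by
      have h2 : ((⌈(T - d) / η₀⌉₊ : ℝ) + 1) ≤ (KK : ℝ) := by
        have := le_max_right 1 (⌈(T - d) / η₀⌉₊ + 1)
        exact_mod_cast this
      have := Nat.le_ceil ((T - d) / η₀)
      linarith
    rw [div_lt_iff₀ hη₀] at h1
    rw [hη']
    rw [div_lt_iff₀ hKKpos]
    linarith
  -- the discrete flow
  set zf : ℕ → E := fun j => Nat.rec x (fun _ w => w + (η / infDist w M) • (w - P w)) j with hzf
  have hzf0 : zf 0 = x := rfl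
  have hzfS : ∀ j, zf (j + 1) = zf j + (η / infDist (zf j) M) • (zf j - P (zf j)) := fun j => rfl
  -- invariant
  set lam : ℝ := ε ^ 2 / d ^ 2 with hlam
  have hlam0 : 0 ≤ lam := by positivity
  have hlam14 : lam ≤ 1 / 4 := by
    rw [hlam, div_le_iff₀ (by positivity)]
    nlinarith
  clear_value C₁ C₃ ε KK η lam zf
  have hmain : ∀ j, j ≤ KK →
      infDist (zf j) M ≤ d + j * η ∧
      d + j * η * (1 - lam) ≤ infDist (zf j) M ∧
      ‖zf j - x‖ ≤ j * η := by
    intro j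
    induction j with
    | zero => intro _; refine ⟨by simp [hzf0]; exact hd'.ge, by simp [hzf0]; exact hd'.le, by simp [hzf0]⟩
    | succ j ih =>
      intro hjKK
      obtain ⟨ih1, ih2, ih3⟩ := ih (le_trans (Nat.le_succ j) hjKK)
      rw [hzfS j]
      generalize hwdef : zf j = w at ih1 ih2 ih3 ⊢
      set s : ℝ := infDist w M with hs
      have hsd : d ≤ s := by
        have : 0 ≤ (j : ℝ) * η * (1 - lam) := by
          apply mul_nonneg (by positivity); linarith
        linarith
      have hs0 : 0 < s := lt_of_lt_of_le hd hsd
      have hjKK' : (j : ℝ) + 1 ≤ KK := by exact_mod_cast hjKK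
      have hsT : s + η ≤ T := by
        have : d + ((j:ℝ) + 1) * η ≤ d + KK * η := by
          have : 0 < η := hη0
          nlinarith
        have hdKK : d + KK * η = T := by
          rw [hη']; field_simp; ring
        nlinarith [ih1]
      have hsR : s < R := by nlinarith
      have haM : P w ∈ M := (hP w hsR).1
      have hnw : ‖w - P w‖ = s := by rw [← dist_eq_norm, dist_comm]; exact (hP w hsR).2.1
      set z' : E := w + (η / s) • (w - P w) with hstep
      have hstepnorm : ‖z' - w‖ = η := by
        rw [hstep]
        simp only [add_sub_cancel_left]
        rw [norm_smul, hnw, Real.norm_eq_abs, abs_of_pos (by positivity)]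
        field_simp
      set s' : ℝ := infDist z' M with hs'
      have hs'ub : s' ≤ s + η := by
        have h := infDist_le_infDist_add_dist (x := z') (y := w) (s := M)
        rw [dist_eq_norm, hstepnorm] at h
        linarith
      have hs'T : s' ≤ T := by
        have : s + η ≤ T := hsT
        linarith
      have hs'R : s' < R := by linarith
      have hbM : P z' ∈ M := (hP z' hs'R).1
      have hnz : ‖z' - P z'‖ = s' := by rw [← dist_eq_norm, dist_comm]; exact (hP z' hs'R).2.1
      -- uniform continuity step
      have hwK : w ∈ {z : E | infDist z M ≤ T} := by
        simp only [Set.mem_setOf_eq]; linarith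
      have hz'K : z' ∈ {z : E | infDist z M ≤ T} := by
        simp only [Set.mem_setOf_eq]; exact hs'T
      have hab : ‖P w - P z'‖ ≤ ε := by
        have := hUC w hwK z' hz'K (by rw [dist_eq_norm, ← norm_neg, neg_sub, hstepnorm]; exact hηη₀)
        rw [dist_eq_norm] at this
        linarith
      -- geometric step estimate : s'^2 ≥ (s+η)^2 - (η/s)*‖Pw - Pz'‖^2
      have hgeo : (s + η) ^ 2 - (η / s) * ‖P w - P z'‖ ^ 2 ≤ s' ^ 2 := by
        have hexp : z' - P z' = (w - P z') + (η / s) • (w - P w) := by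
          rw [hstep]; abel
        have e1 : s' ^ 2 = ‖w - P z'‖ ^ 2 + 2 * (η / s) * ⟪w - P z', w - P w⟫
            + (η / s) ^ 2 * s ^ 2 := by
          rw [← hnz, hexp]
          rw [norm_add_sq_real, norm_smul, real_inner_smul_right]
          rw [Real.norm_eq_abs, abs_of_pos (by positivity), hnw]
          ring
        have e2 : ⟪w - P z', w - P w⟫ = s ^ 2 + ⟪w - P w, P w - P z'⟫ := by
          have hsplit : w - P z' = (w - P w) + (P w - P z') := by abel
          rw [hsplit, inner_add_left, real_inner_self_eq_norm_sq, hnw,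
            real_inner_comm (P w - P z') (w - P w)]
        have e3 : ‖w - P z'‖ ^ 2 = s ^ 2 + 2 * ⟪w - P w, P w - P z'⟫ + ‖P w - P z'‖ ^ 2 := by
          have hsplit : w - P z' = (w - P w) + (P w - P z') := by abel
          rw [hsplit, norm_add_sq_real, hnw]
        have e4 : s ≤ ‖w - P z'‖ := by
          rw [← dist_eq_norm]
          exact infDist_le_dist_of_mem hbM
        have e6 : s ^ 2 ≤ ‖w - P z'‖ ^ 2 := pow_le_pow_left₀ hs0.le e4 2
        have e5 : -‖P w - P z'‖ ^ 2 / 2 ≤ ⟪w - P w, P w - P z'⟫ := by linarith [e3, e6]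
        have hηs : 0 < η / s := by positivity
        have e7 : 2 * (η / s) * (-‖P w - P z'‖ ^ 2 / 2) ≤ 2 * (η / s) * ⟪w - P w, P w - P z'⟫ := by
          apply mul_le_mul_of_nonneg_left e5 (by positivity)
        calc (s + η) ^ 2 - (η / s) * ‖P w - P z'‖ ^ 2
            = s ^ 2 + 2 * (η / s) * (s ^ 2 + (-‖P w - P z'‖ ^ 2 / 2)) + (η / s) ^ 2 * s ^ 2 := by
              field_simp; ring
          _ ≤ ‖w - P z'‖ ^ 2 + 2 * (η / s) * (s ^ 2 + ⟪w - P w, P w - P z'⟫) + (η / s) ^ 2 * s ^ 2 := by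
              have e8 : 2 * (η / s) * (s ^ 2 + (-‖P w - P z'‖ ^ 2 / 2))
                  ≤ 2 * (η / s) * (s ^ 2 + ⟪w - P w, P w - P z'⟫) := by
                linarith [e7]
              linarith [e6, e8]
          _ = s' ^ 2 := by rw [e1, e2]
      -- lower bound propagation
      have hlow : s + η * (1 - lam) ≤ s' := by
        have hB : η * lam ≤ η / 4 := by
          have := mul_le_mul_of_nonneg_left hlam14 hη0.le
          linarith
        have hge : (s + η - η * lam) ^ 2 ≤ (s + η) ^ 2 - (η / s) * ε ^ 2 := by
          -- need : (η/s)*ε² ≤ (η lam)(2(s+η) - η lam); note lam = ε²/d², s ≥ d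
          have h1 : (η / s) * ε ^ 2 ≤ (η / d) * ε ^ 2 := by
            apply mul_le_mul_of_nonneg_right _ (by positivity)
            apply div_le_div_of_nonneg_left (le_of_lt hη0) hd hsd
          have h2 : (η / d) * ε ^ 2 = η * lam * d := by
            rw [hlam]; field_simp
          have h3 : η * lam * d ≤ η * lam * (s + η) := by
            apply mul_le_mul_of_nonneg_left _ (by positivity)
            linarith
          have h4 : η * lam ≤ s + η := by linarith
          have hB0 : (0:ℝ) ≤ η * lam := mul_nonneg hη0.le hlam0
          have h5 : (η * lam) * (η * lam) ≤ (η * lam) * (s + η) :=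
            mul_le_mul_of_nonneg_left h4 hB0
          linarith [h1, h2, h3, h5]
        have hgeε : (s + η - η * lam) ^ 2 ≤ s' ^ 2 := by
          have h6 : (η / s) * ‖P w - P z'‖ ^ 2 ≤ (η / s) * ε ^ 2 := by
            apply mul_le_mul_of_nonneg_left _ (by positivity)
            exact pow_le_pow_left₀ (norm_nonneg _) hab 2
          linarith [hgeo, hge, h6]
        have ht0 : 0 ≤ s + η - η * lam := by linarith [hB]
        have hs'0 : 0 ≤ s' := infDist_nonneg
        have h7 := le_of_pow_le_pow_left₀ two_ne_zero hs'0 hgeε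
        linarith [h7]
      refine ⟨?_, ?_, ?_⟩
      · push_cast; linarith [hs'ub, ih1]
      · push_cast; linarith [hlow, ih2]
      · have htri : ‖z' - x‖ ≤ ‖z' - w‖ + ‖w - x‖ := by
          have := dist_triangle z' w x
          simpa [dist_eq_norm] using this
        rw [hstepnorm] at htri
        push_cast
        linarith
  -- conclude from the invariant at j = KK
  obtain ⟨h1K, h2K, h3K⟩ := hmain KK le_rfl
  set zK : E := zf KK with hzK
  set Err : ℝ := (T - d) * lam with hErr
  have hKKη : (KK : ℝ) * η = T - d := by
    rw [hη']; field_simp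
  have hErr0 : 0 ≤ Err := mul_nonneg (by linarith) hlam0
  have hErrT : Err ≤ T := by
    have := mul_le_mul_of_nonneg_left hlam14 (by linarith : (0:ℝ) ≤ T - d)
    linarith
  have hsK : T - Err ≤ infDist zK M := by
    have h5 : (KK:ℝ) * η * (1 - lam) = (T - d) * (1 - lam) := by rw [hKKη]
    have h6 := h2K
    rw [h5] at h6
    have : d + (T - d) * (1 - lam) = T - Err := by rw [hErr]; ring
    linarith
  have hq : ‖zK - x‖ ≤ T - d := by
    have := h3K; rw [← hKKη]; linarith
  have hq0 : 0 ≤ ‖zK - x‖ := norm_nonneg _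
  have hA : T - Err ≤ ‖zK - P x‖ := by
    have h7 : infDist zK M ≤ dist zK (P x) := infDist_le_dist_of_mem ha0
    rw [dist_eq_norm] at h7
    linarith
  set xT : E := P x + (T / d) • (x - P x) with hxT
  have hxTx : xT - x = ((T - d) / d) • (x - P x) := by
    have h8 : (T / d) • (x - P x) - (1:ℝ) • (x - P x) = (T / d - 1) • (x - P x) := by
      rw [sub_smul]
    have h9 : T / d - 1 = (T - d) / d := by field_simp
    calc xT - x = (T / d) • (x - P x) - (1:ℝ) • (x - P x) := by
          rw [hxT, one_smul]; abel
      _ = ((T - d) / d) • (x - P x) := by rw [h8, h9]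
  -- inner product identity
  have hAsq : ‖zK - P x‖ ^ 2 = ‖zK - x‖ ^ 2 + 2 * ⟪zK - x, x - P x⟫ + d ^ 2 := by
    have hsplit : zK - P x = (zK - x) + (x - P x) := by abel
    rw [hsplit, norm_add_sq_real, hnx]
  have hnormxT : ‖zK - xT‖ ^ 2 = ‖zK - x‖ ^ 2 - 2 * ((T - d) / d) * ⟪zK - x, x - P x⟫
      + ((T - d) / d) ^ 2 * d ^ 2 := by
    have hsplit : zK - xT = (zK - x) - (xT - x) := by abel
    rw [hsplit, hxTx, norm_sub_sq_real, real_inner_smul_right, norm_smul,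
      Real.norm_eq_abs, abs_of_nonneg (div_nonneg (by linarith) hd.le : (0:ℝ) ≤ (T - d) / d), hnx]
    ring
  have hbound : ‖zK - xT‖ ^ 2 ≤ 2 * T * (T - d) * Err / d := by
    have h10 : ‖zK - x‖ ^ 2 ≤ (T - d) ^ 2 := pow_le_pow_left₀ hq0 hq 2
    have h11 : (T - Err) ^ 2 ≤ ‖zK - P x‖ ^ 2 :=
      pow_le_pow_left₀ (by linarith) hA 2
    have h12 : ⟪zK - x, x - P x⟫ = (‖zK - P x‖ ^ 2 - ‖zK - x‖ ^ 2 - d ^ 2) / 2 := by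
      linarith [hAsq]
    rw [le_div_iff₀ hd]
    have expand : ‖zK - xT‖ ^ 2 * d
        = ‖zK - x‖ ^ 2 * T - (T - d) * ‖zK - P x‖ ^ 2 + (T - d) * T * d := by
      rw [hnormxT, h12]
      field_simp
      ring
    rw [expand]
    linarith [mul_le_mul_of_nonneg_right h10 hT0.le,
      mul_le_mul_of_nonneg_left h11 (by linarith : (0:ℝ) ≤ T - d),
      mul_nonneg (by linarith : (0:ℝ) ≤ T - d) (sq_nonneg Err)]
  -- distance from xT to M
  have htube : infDist zK M ≤ infDist xT M + dist zK xT :=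
    infDist_le_infDist_add_dist
  have hdistzx : dist zK xT = ‖zK - xT‖ := dist_eq_norm _ _
  -- identify the error terms
  have hErrC : Err = C₁ * ε ^ 2 := by rw [hErr, hlam, hC₁]; ring
  have hsqrtbound : ‖zK - xT‖ ≤ C₃ * ε := by
    have hC3e : (C₃ * ε) ^ 2 = 2 * T * (T - d) * Err / d := by
      have e1 : Real.sqrt (2 * T * (T - d) / d) ^ 2 = 2 * T * (T - d) / d :=
        Real.sq_sqrt (div_nonneg (mul_nonneg (by linarith) (by linarith)) hd.le)
      have e2 : Real.sqrt (T - d) ^ 2 = T - d := Real.sq_sqrt (by linarith)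
      rw [hC₃, hErr, hlam]
      have e3 : (Real.sqrt (2 * T * (T - d) / d) * Real.sqrt (T - d) / d * ε) ^ 2
          = Real.sqrt (2 * T * (T - d) / d) ^ 2 * Real.sqrt (T - d) ^ 2 * ε ^ 2 / d ^ 2 := by
        ring
      rw [e3, e1, e2]
      field_simp
    have hC3e0 : 0 ≤ C₃ * ε := mul_nonneg hC₃0 hε0.le
    have hb2 : ‖zK - xT‖ ^ 2 ≤ (C₃ * ε) ^ 2 := by rw [hC3e]; exact hbound
    exact le_of_pow_le_pow_left₀ two_ne_zero hC3e0 hb2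
  have final : T - Err - C₃ * ε ≤ infDist xT M := by
    rw [hdistzx] at htube
    linarith [hsK, hsqrtbound, htube]
  rw [hErrC] at final
  linarith [final]


/-- Hypomonotonicity of the projection (Federer's inequality with reach `R`). -/
lemma hypo_ineq (hM : IsCompact M) (hne : M.Nonempty) (hR : 0 < R)
    (hP : ∀ z, infDist z M < R →
      P z ∈ M ∧ dist (P z) z = infDist z M ∧ ∀ y ∈ M, dist y z = infDist z M → y = P z)
    {u : E} (hu : infDist u M < R) {p : E} (hp : p ∈ M) :
    2 * R * ⟪u - P u, p - P u⟫ ≤ infDist u M * ‖p - P u‖ ^ 2 := by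
  set d : ℝ := infDist u M with hd'
  have hd0 : 0 ≤ d := infDist_nonneg
  rcases eq_or_lt_of_le hd0 with hd0' | hd0'
  · -- d = 0 : u ∈ M and P u = u
    have huM : u ∈ M := (hM.isClosed.mem_iff_infDist_zero hne).2 hd0'.symm
    have hPu : P u = u := ((hP u hu).2.2 u huM (by rw [dist_self]; exact hd0'.trans hd')).symm
    rw [hPu]
    simp only [sub_self, inner_zero_left, mul_zero]
    exact mul_nonneg hd0 (sq_nonneg _)
  -- d > 0
  have hnu : ‖u - P u‖ = d := by rw [← dist_eq_norm, dist_comm]; exact (hP u hu).2.1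
  -- step 1 : ∀ T ∈ [d, R), 2 T ⟪u - Pu, p - Pu⟫ ≤ d ‖p - Pu‖²
  have hstep : ∀ T, d ≤ T → T < R → 2 * T * ⟪u - P u, p - P u⟫ ≤ d * ‖p - P u‖ ^ 2 := by
    intro T hT1 hT2
    have hray := ray_lemma hM hne hR hP hd0' hT1 hT2
    have hdist : T ≤ ‖P u + (T / d) • (u - P u) - p‖ := by
      refine le_trans hray ?_
      rw [← dist_eq_norm]
      exact infDist_le_dist_of_mem hp
    have hT0 : 0 < T := lt_of_lt_of_le hd0' hT1
    have hsq : T ^ 2 ≤ ‖P u + (T / d) • (u - P u) - p‖ ^ 2 :=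
      pow_le_pow_left₀ hT0.le hdist 2
    have hexp : ‖P u + (T / d) • (u - P u) - p‖ ^ 2
        = ‖P u - p‖ ^ 2 + 2 * (T / d) * ⟪P u - p, u - P u⟫ + T ^ 2 := by
      have hsplit : P u + (T / d) • (u - P u) - p = (P u - p) + (T / d) • (u - P u) := by
        abel
      have hns : ‖(T / d) • (u - P u)‖ = T := by
        rw [norm_smul, Real.norm_eq_abs, abs_of_nonneg (div_nonneg hT0.le hd0), hnu]
        field_simp
      rw [hsplit, norm_add_sq_real, hns, real_inner_smul_right]
      ring
    have h2 : 0 ≤ ‖P u - p‖ ^ 2 + 2 * (T / d) * ⟪P u - p, u - P u⟫ := by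
      nlinarith [hsq, hexp]
    have h3 : 2 * (T / d) * ⟪u - P u, p - P u⟫ ≤ ‖P u - p‖ ^ 2 := by
      have : ⟪P u - p, u - P u⟫ = - ⟪u - P u, p - P u⟫ := by
        rw [real_inner_comm]
        have : P u - p = -(p - P u) := by abel
        rw [this, inner_neg_right]
      rw [this] at h2
      linarith
    have h4 : ‖P u - p‖ = ‖p - P u‖ := by rw [norm_sub_rev]
    rw [h4] at h3
    -- multiply by d > 0
    have h5 := mul_le_mul_of_nonneg_left h3 hd0
    calc 2 * T * ⟪u - P u, p - P u⟫ = d * (2 * (T / d) * ⟪u - P u, p - P u⟫) := by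
          field_simp
      _ ≤ d * ‖p - P u‖ ^ 2 := h5
  -- step 2 : take T → R
  by_contra hcon
  push_neg at hcon
  have hc0 : 0 < ⟪u - P u, p - P u⟫ := by
    nlinarith [sq_nonneg ‖p - P u‖, mul_nonneg hd0 (sq_nonneg ‖p - P u‖)]
  set c : ℝ := ⟪u - P u, p - P u⟫ with hc'
  set T₀ : ℝ := max d ((d * ‖p - P u‖ ^ 2 / (2 * c) + R) / 2) with hT₀'
  have hT₀d : d ≤ T₀ := le_max_left _ _
  have hQ : d * ‖p - P u‖ ^ 2 / (2 * c) < R := by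
    rw [div_lt_iff₀ (by positivity)]
    nlinarith [hcon]
  have hT₀R : T₀ < R := by
    apply max_lt hu
    linarith
  have := hstep T₀ hT₀d hT₀R
  have hT₀big : (d * ‖p - P u‖ ^ 2 / (2 * c) + R) / 2 ≤ T₀ := le_max_right _ _
  have h6 : d * ‖p - P u‖ ^ 2 / (2 * c) < T₀ := by
    have : d * ‖p - P u‖ ^ 2 / (2 * c) < (d * ‖p - P u‖ ^ 2 / (2 * c) + R) / 2 := by
      linarith
    linarith
  rw [div_lt_iff₀ (by positivity)] at h6
  nlinarith [this, h6]

/-- Two-point Lipschitz-type bound for the projection. -/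
lemma lip_ineq (hM : IsCompact M) (hne : M.Nonempty) (hR : 0 < R)
    (hP : ∀ z, infDist z M < R →
      P z ∈ M ∧ dist (P z) z = infDist z M ∧ ∀ y ∈ M, dist y z = infDist z M → y = P z)
    {u v : E} (hu : infDist u M < R) (hv : infDist v M < R) :
    ‖P u - P v‖ * (2 * R - infDist u M - infDist v M) ≤ 2 * R * ‖u - v‖ := by
  have h1 := hypo_ineq hM hne hR hP hu (hP v hv).1
  have h2 := hypo_ineq hM hne hR hP hv (hP u hu).1
  set r : ℝ := ‖P u - P v‖ with hr'
  have hr0 : 0 ≤ r := norm_nonneg _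
  have hrsq : r ^ 2 = ⟪P u - P v, P u - P v⟫ := (real_inner_self_eq_norm_sq _).symm
  have hdecomp : (P u - P v : E) = (P u - u) + (u - v) + (v - P v) := by abel
  have hsum : r ^ 2 = ⟪P u - u, P u - P v⟫ + ⟪u - v, P u - P v⟫ + ⟪v - P v, P u - P v⟫ := by
    rw [hrsq]
    nth_rewrite 1 [hdecomp]
    rw [inner_add_left, inner_add_left]
  have e1 : ⟪P u - u, P u - P v⟫ = ⟪u - P u, P v - P u⟫ := by
    have ha : (P u - u : E) = -(u - P u) := by abel
    have hb : (P u - P v : E) = -(P v - P u) := by abel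
    rw [ha, hb, inner_neg_neg]
  have e2 : ‖P v - P u‖ = r := by rw [hr', norm_sub_rev]
  have h1' : 2 * R * ⟪P u - u, P u - P v⟫ ≤ infDist u M * r ^ 2 := by
    rw [e1]
    calc 2 * R * ⟪u - P u, P v - P u⟫ ≤ infDist u M * ‖P v - P u‖ ^ 2 := h1
      _ = infDist u M * r ^ 2 := by rw [e2]
  have h2' : 2 * R * ⟪v - P v, P u - P v⟫ ≤ infDist v M * r ^ 2 := h2
  have h3 : ⟪u - v, P u - P v⟫ ≤ ‖u - v‖ * r := by
    calc ⟪u - v, P u - P v⟫ ≤ ‖u - v‖ * ‖P u - P v‖ := real_inner_le_norm _ _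
      _ = ‖u - v‖ * r := rfl
  -- combine : 2R r² ≤ (du + dv) r² + 2R ‖u-v‖ r
  have hcomb : 2 * R * r ^ 2 ≤ (infDist u M + infDist v M) * r ^ 2 + 2 * R * (‖u - v‖ * r) := by
    have := mul_le_mul_of_nonneg_left h3 (by linarith : (0:ℝ) ≤ 2 * R)
    nlinarith [h1', h2', hsum]
  rcases eq_or_lt_of_le hr0 with hr00 | hr00
  · rw [← hr00]
    simp
    positivity
  · have := hcomb
    have hgoal : (r * (2 * R - infDist u M - infDist v M)) * r ≤ (2 * R * ‖u - v‖) * r := by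
      nlinarith [hcomb]
    exact le_of_mul_le_mul_right hgoal hr00


end Geo2

namespace StackAux

variable {n N : ℕ}

lemma sn_nonneg (z : Fin n → EuclideanSpace ℝ (Fin N)) : 0 ≤ stackNorm z :=
  Real.sqrt_nonneg _

lemma sn_sq (z : Fin n → EuclideanSpace ℝ (Fin N)) :
    stackNorm z ^ 2 = ∑ i, ‖z i‖ ^ 2 :=
  Real.sq_sqrt (Finset.sum_nonneg fun i _ => sq_nonneg _)

lemma sn_le {z : Fin n → EuclideanSpace ℝ (Fin N)} {c : ℝ} (hc : 0 ≤ c)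
    (h : ∑ i, ‖z i‖ ^ 2 ≤ c ^ 2) : stackNorm z ≤ c := by
  have := Real.sqrt_le_sqrt h
  rwa [Real.sqrt_sq hc] at this

lemma comp_le_sn (z : Fin n → EuclideanSpace ℝ (Fin N)) (i : Fin n) :
    ‖z i‖ ≤ stackNorm z := by
  have h : ‖z i‖ ^ 2 ≤ ∑ j, ‖z j‖ ^ 2 :=
    Finset.single_le_sum (fun j _ => sq_nonneg ‖z j‖) (Finset.mem_univ i)
  have := Real.sqrt_le_sqrt h
  rwa [Real.sqrt_sq (norm_nonneg _)] at this

lemma sn_eq_pilp (z : Fin n → EuclideanSpace ℝ (Fin N)) :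
    stackNorm z = ‖(WithLp.equiv 2 (Fin n → EuclideanSpace ℝ (Fin N))).symm z‖ := by
  rw [PiLp.norm_eq_of_L2]
  unfold stackNorm
  congr 1

lemma sn_combo (a b : ℝ) (f g : Fin n → EuclideanSpace ℝ (Fin N)) :
    stackNorm (fun i => a • f i + b • g i) ≤ |a| * stackNorm f + |b| * stackNorm g := by
  rw [sn_eq_pilp, sn_eq_pilp, sn_eq_pilp]
  have hrfl : (WithLp.equiv 2 (Fin n → EuclideanSpace ℝ (Fin N))).symm
        (fun i => a • f i + b • g i)
      = a • (WithLp.equiv 2 (Fin n → EuclideanSpace ℝ (Fin N))).symm f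
        + b • (WithLp.equiv 2 (Fin n → EuclideanSpace ℝ (Fin N))).symm g := rfl
  rw [hrfl]
  refine le_trans (norm_add_le _ _) ?_
  rw [norm_smul, norm_smul, Real.norm_eq_abs, Real.norm_eq_abs]

/-- The key scalar inequality behind the contraction factor. -/
lemma algIneq {R δ μ ν s ρ : ℝ} {n : ℕ} (hn1 : 1 ≤ (n:ℝ)) (hR : 0 < R) (hδ0 : 0 < δ)
    (hδR : δ < R / 4) (hμ : 0 ≤ μ) (hν : 0 ≤ ν) (hs : 0 ≤ s)
    (hρ0 : 0 ≤ ρ) (hρ1 : ρ ≤ 1)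
    (hsq : s ^ 2 = μ ^ 2 + n * ν ^ 2) (hnv : n * ν ^ 2 ≤ μ ^ 2) (hsδ : s ≤ δ) :
    2 * μ * (R - δ) ≤ s * (2 * R - ρ * μ - 2 * ν) := by
  have hn0 : (0:ℝ) ≤ n := by linarith
  have hμs : μ ≤ s := by nlinarith
  have hνs : ν ≤ s := by nlinarith
  have hred : s * (2 * R - μ - 2 * ν) ≤ s * (2 * R - ρ * μ - 2 * ν) := by
    apply mul_le_mul_of_nonneg_left _ hs
    nlinarith
  have hgoal' : 2 * μ * (R - δ) ≤ s * (2 * R - μ - 2 * ν) := by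
    rcases le_or_gt (2 * ν) μ with hc | hc
    · have p1 : 0 ≤ s * (μ - 2 * ν) := mul_nonneg hs (by linarith)
      have p2 : 0 ≤ 2 * R * (s - μ) := mul_nonneg (by linarith) (by linarith)
      have p3 : 0 ≤ μ * (δ - s) := mul_nonneg hμ (by linarith)
      nlinarith [p1, p2, p3]
    · -- μ < 2ν
      have hν0 : 0 < ν := by
        by_contra hh
        push_neg at hh
        have : ν = 0 := le_antisymm hh hν
        rw [this] at hc
        linarith
      have hs0 : 0 < s := lt_of_lt_of_le hν0 hνs
      have hsum0 : 0 < s + μ := by linarith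
      have key1 : 0 ≤ μ * ((μ - ν) ^ 2 + ((n:ℝ) - 1) * ν ^ 2) := by
        apply mul_nonneg hμ
        have : (0:ℝ) ≤ ((n:ℝ) - 1) * ν ^ 2 := mul_nonneg (by linarith) (sq_nonneg _)
        nlinarith [sq_nonneg (μ - ν)]
      have key2 : (μ ^ 2 + n * ν ^ 2) * (2 * ν - μ) ≤ 2 * n * ν ^ 3 := by nlinarith [key1]
      have h2ν : 2 * ν ≤ R := by linarith
      have h2nR : 4 * n * ν ^ 3 ≤ 2 * R * (n * ν ^ 2) := by
        have hnn : (0:ℝ) ≤ 2 * n * ν ^ 2 := by positivity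
        have := mul_le_mul_of_nonneg_left h2ν hnn
        nlinarith [this]
      have m0 : 0 ≤ s * (2 * ν - μ) := mul_nonneg hs (by linarith)
      have m1 : s * (2 * ν - μ) * (s + μ) ≤ s * (2 * ν - μ) * (2 * s) :=
        mul_le_mul_of_nonneg_left (by linarith) m0
      have m3 : s * (2 * ν - μ) * (2 * s) = 2 * (μ ^ 2 + n * ν ^ 2) * (2 * ν - μ) := by
        have : s * (2 * ν - μ) * (2 * s) = 2 * s ^ 2 * (2 * ν - μ) := by ring
        rw [this, hsq]
      have hBC : s * (2 * ν - μ) * (s + μ) ≤ 4 * n * ν ^ 3 := by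
        rw [m3] at m1
        linarith [key2]
      have hid : (2 * R * (s - μ) - s * (2 * ν - μ)) * (s + μ)
          = 2 * R * (n * ν ^ 2) - s * (2 * ν - μ) * (s + μ) := by
        linear_combination (2 * R) * hsq
      have hE : 0 ≤ (2 * R * (s - μ) - s * (2 * ν - μ)) * (s + μ) := by
        rw [hid]
        linarith [hBC, h2nR]
      have hfac : 0 ≤ 2 * R * (s - μ) - s * (2 * ν - μ) := by
        by_contra hneg
        push_neg at hneg
        nlinarith [hE, hsum0]
      have p3 : 0 ≤ μ * (δ - s) := mul_nonneg hμ (by linarith)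
      nlinarith [hfac, p3]
  linarith [hred, hgoal']

end StackAux

open StackAux

section Helpers
variable {n N : ℕ}

lemma mean_shift (hn : 0 < n) (v : Fin n → EuclideanSpace ℝ (Fin N)) :
    ∑ i, (v i - (n:ℝ)⁻¹ • ∑ j, v j) = 0 := by
  rw [Finset.sum_sub_distrib, Finset.sum_const, Finset.card_univ, Fintype.card_fin]
  rw [← Nat.cast_smul_eq_nsmul ℝ, smul_smul, mul_inv_cancel₀
    (Nat.cast_ne_zero.2 hn.ne' : (n:ℝ) ≠ 0), one_smul, sub_self]

lemma mean_close (hn : 0 < n) (v : Fin n → EuclideanSpace ℝ (Fin N))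
    (c : EuclideanSpace ℝ (Fin N)) {B : ℝ} (hB : ∀ i, ‖v i - c‖ ≤ B) (i : Fin n) :
    ‖(n:ℝ)⁻¹ • ∑ j, v j - v i‖ ≤ 2 * B := by
  have hn0 : (n:ℝ) ≠ 0 := Nat.cast_ne_zero.2 hn.ne'
  have hid : (n:ℝ)⁻¹ • ∑ j, v j - v i = (n:ℝ)⁻¹ • ∑ j, (v j - v i) := by
    rw [Finset.sum_sub_distrib, smul_sub, Finset.sum_const, Finset.card_univ,
      Fintype.card_fin, ← Nat.cast_smul_eq_nsmul ℝ, smul_smul, inv_mul_cancel₀ hn0, one_smul]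
  rw [hid, norm_smul, Real.norm_eq_abs, abs_of_nonneg (by positivity : (0:ℝ) ≤ (n:ℝ)⁻¹)]
  have h1 : ‖∑ j, (v j - v i)‖ ≤ ∑ j, ‖v j - v i‖ := norm_sum_le _ _
  have hterm : ∀ j, ‖v j - v i‖ ≤ 2 * B := by
    intro j
    calc ‖v j - v i‖ = ‖(v j - c) - (v i - c)‖ := by congr 1; abel
      _ ≤ ‖v j - c‖ + ‖v i - c‖ := norm_sub_le _ _
      _ ≤ 2 * B := by linarith [hB j, hB i]
  have h2 : ∑ j, ‖v j - v i‖ ≤ ∑ _j : Fin n, (2 * B) :=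
    Finset.sum_le_sum fun j _ => hterm j
  have h3 : ∑ _j : Fin n, (2 * B) = (n:ℝ) * (2 * B) := by
    rw [Finset.sum_const, Finset.card_univ, Fintype.card_fin, nsmul_eq_mul]
  have hn0' : (0:ℝ) < (n:ℝ)⁻¹ := by positivity
  calc (n:ℝ)⁻¹ * ‖∑ j, (v j - v i)‖ ≤ (n:ℝ)⁻¹ * ((n:ℝ) * (2 * B)) := by
        apply mul_le_mul_of_nonneg_left _ hn0'.le
        rw [← h3]; exact le_trans h1 h2
    _ = 2 * B := by field_simp

lemma var_ident (hn : 0 < n) (v : Fin n → EuclideanSpace ℝ (Fin N))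
    (c : EuclideanSpace ℝ (Fin N)) :
    ∑ i, ‖v i - c‖ ^ 2 = (∑ i, ‖v i - (n:ℝ)⁻¹ • ∑ j, v j‖ ^ 2)
      + (n:ℝ) * ‖(n:ℝ)⁻¹ • ∑ j, v j - c‖ ^ 2 := by
  set m : EuclideanSpace ℝ (Fin N) := (n:ℝ)⁻¹ • ∑ j, v j with hm
  have hterm : ∀ i, ‖v i - c‖ ^ 2
      = ‖v i - m‖ ^ 2 + 2 * ⟪v i - m, m - c⟫ + ‖m - c‖ ^ 2 := by
    intro i
    have hsplit : v i - c = (v i - m) + (m - c) := by abel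
    rw [hsplit, norm_add_sq_real]
  rw [Finset.sum_congr rfl fun i _ => hterm i]
  rw [Finset.sum_add_distrib, Finset.sum_add_distrib]
  have hcross : ∑ i, 2 * ⟪v i - m, m - c⟫ = 0 := by
    rw [← Finset.mul_sum]
    have : ∑ i, ⟪v i - m, m - c⟫ = ⟪∑ i, (v i - m), m - c⟫ := by
      rw [sum_inner]
    rw [this, hm, mean_shift hn v, inner_zero_left, mul_zero]
  rw [hcross]
  have hconst : ∑ _i : Fin n, ‖m - c‖ ^ 2 = (n:ℝ) * ‖m - c‖ ^ 2 := by
    rw [Finset.sum_const, Finset.card_univ, Fintype.card_fin, nsmul_eq_mul]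
  rw [hconst]
  ring

end Helpers

/-- linear convergence of single-step projected gradient consensus:
under the hypotheses of the staying-in-neighborhood lemma with `d_k ≡ 0`, i.e.
`x_{i,k+1} = P((1-γ) x_{i,k} + γ ∑_j W_{ij} x_{j,k})`, the consensus error contracts
linearly: `‖x_{k+1} - x̄_{k+1}‖ ≤ ρ₁ ‖x_k - x̄_k‖` for all `k ≥ 0`, where
`ρ₁ = (R - Rγ(1-σ₂))/(R - δ) < 1`. -/
theorem stmt11 {n N : ℕ} (hn : 0 < n)
    (M : Set (EuclideanSpace ℝ (Fin N))) (hMcompact : IsCompact M) (hMne : M.Nonempty)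
    (R : ℝ) (hR : 0 < R)
    (P : EuclideanSpace ℝ (Fin N) → EuclideanSpace ℝ (Fin N))
    (hP : ∀ z, Metric.infDist z M < R →
      P z ∈ M ∧ dist (P z) z = Metric.infDist z M ∧
        ∀ y ∈ M, dist y z = Metric.infDist z M → y = P z)
    (W : Matrix (Fin n) (Fin n) ℝ) (hsymm : W.IsSymm) (hnn : ∀ i j, 0 ≤ W i j)
    (hrow : ∀ i, ∑ j, W i j = 1)
    (σ₂ : ℝ) (hσ₂0 : 0 ≤ σ₂) (hσ₂1 : σ₂ < 1)
    (hσ : ∀ z : Fin n → EuclideanSpace ℝ (Fin N), (∑ i, z i = 0) →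
      stackNorm (fun i => ∑ j, W i j • z j) ≤ σ₂ * stackNorm z)
    (γ : ℝ) (hγ0 : 0 < γ) (hγ1 : γ ≤ 1)
    (δ : ℝ) (hδ0 : 0 < δ) (hδ : δ < min (R * γ * (1 - σ₂)) (R / 4))
    (x : ℕ → Fin n → EuclideanSpace ℝ (Fin N))
    (hx0mem : ∀ i, x 0 i ∈ M)
    (hiter : ∀ k i, x (k + 1) i = P ((1 - γ) • x k i + γ • (∑ j, W i j • x k j)))
    (hinit : stackNorm (fun i => x 0 i - P ((n : ℝ)⁻¹ • ∑ j, x 0 j)) ≤ δ) :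
    (R - R * γ * (1 - σ₂)) / (R - δ) < 1 ∧
    ∀ k, stackNorm (fun i => x (k + 1) i - P ((n : ℝ)⁻¹ • ∑ j, x (k + 1) j)) ≤
      ((R - R * γ * (1 - σ₂)) / (R - δ)) *
        stackNorm (fun i => x k i - P ((n : ℝ)⁻¹ • ∑ j, x k j)) := by
  have hδR4 : δ < R / 4 := lt_of_lt_of_le hδ (min_le_right _ _)
  have hδγ : δ < R * γ * (1 - σ₂) := lt_of_lt_of_le hδ (min_le_left _ _)
  have hRδ : 0 < R - δ := by linarith
  have hn1 : 1 ≤ (n:ℝ) := by exact_mod_cast hn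
  have hσ₂1' : 0 < 1 - σ₂ := by linarith
  set ρt : ℝ := 1 - γ * (1 - σ₂) with hρt
  have hρt0 : 0 ≤ ρt := by nlinarith
  have hρt1 : ρt ≤ 1 := by nlinarith
  have hRρ : R - R * γ * (1 - σ₂) = R * ρt := by rw [hρt]; ring
  have hρ₁lt1 : (R - R * γ * (1 - σ₂)) / (R - δ) < 1 := by
    rw [div_lt_one hRδ]
    linarith
  refine ⟨hρ₁lt1, ?_⟩
  set ρ₁ : ℝ := (R - R * γ * (1 - σ₂)) / (R - δ) with hρ₁
  have hρ₁eq : ρ₁ = R * ρt / (R - δ) := by rw [hρ₁, hRρ]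
  have hρ₁0 : 0 ≤ ρ₁ := by
    rw [hρ₁eq]
    exact div_nonneg (mul_nonneg hR.le hρt0) hRδ.le
  -- the key one-step estimate
  have key : ∀ k, (∀ i, x k i ∈ M) →
      stackNorm (fun i => x k i - P ((n : ℝ)⁻¹ • ∑ j, x k j)) ≤ δ →
      (∀ i, x (k + 1) i ∈ M) ∧
      stackNorm (fun i => x (k + 1) i - P ((n : ℝ)⁻¹ • ∑ j, x (k + 1) j)) ≤
        ρ₁ * stackNorm (fun i => x k i - P ((n : ℝ)⁻¹ • ∑ j, x k j)) := by
    intro k hmem he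
    set xh : EuclideanSpace ℝ (Fin N) := (n : ℝ)⁻¹ • ∑ j, x k j with hxh
    set xb : EuclideanSpace ℝ (Fin N) := P xh with hxb
    set s : ℝ := stackNorm (fun i => x k i - xb) with hs
    have hs0 : 0 ≤ s := sn_nonneg _
    have hsδ : s ≤ δ := he
    -- tube membership of the mean
    have hcomp : ∀ i, ‖x k i - xb‖ ≤ δ := fun i =>
      le_trans (comp_le_sn (fun i => x k i - xb) i) hsδ
    have hxhi : ∀ i, ‖xh - x k i‖ ≤ 2 * δ := fun i => mean_close hn (x k) xb hcomp i
    have i₀ : Fin n := ⟨0, hn⟩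
    have hxhtube : infDist xh M ≤ 2 * δ := by
      calc infDist xh M ≤ dist xh (x k i₀) := infDist_le_dist_of_mem (hmem i₀)
        _ = ‖xh - x k i₀‖ := dist_eq_norm _ _
        _ ≤ 2 * δ := hxhi i₀
    have hxhR : infDist xh M < R := by linarith
    have hxbM : xb ∈ M := (hP xh hxhR).1
    set ν : ℝ := ‖xh - xb‖ with hν
    have hνinf : ν = infDist xh M := by
      rw [hν, ← dist_eq_norm, dist_comm]
      exact (hP xh hxhR).2.1
    have hν0 : 0 ≤ ν := norm_nonneg _
    set μ : ℝ := stackNorm (fun i => x k i - xh) with hμ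
    have hμ0 : 0 ≤ μ := sn_nonneg _
    -- s² = μ² + n ν²
    have hesq : s ^ 2 = μ ^ 2 + (n:ℝ) * ν ^ 2 := by
      rw [hs, hμ, sn_sq, sn_sq]
      have hvi := var_ident hn (x k) xb
      rw [← hxh] at hvi
      rw [hvi, ← hν]
    -- n ν² ≤ μ²
    have hnv : (n:ℝ) * ν ^ 2 ≤ μ ^ 2 := by
      have hterm : ∀ i, ν ^ 2 ≤ ‖x k i - xh‖ ^ 2 := by
        intro i
        have h1 : ν ≤ ‖x k i - xh‖ := by
          rw [hνinf]
          calc infDist xh M ≤ dist xh (x k i) := infDist_le_dist_of_mem (hmem i)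
            _ = ‖xh - x k i‖ := dist_eq_norm _ _
            _ = ‖x k i - xh‖ := norm_sub_rev _ _
        exact pow_le_pow_left₀ hν0 h1 2
      have h2 : ∑ _i : Fin n, ν ^ 2 ≤ ∑ i, ‖x k i - xh‖ ^ 2 :=
        Finset.sum_le_sum fun i _ => hterm i
      rw [Finset.sum_const, Finset.card_univ, Fintype.card_fin, nsmul_eq_mul] at h2
      rw [hμ, sn_sq]
      exact h2
    have hnn0 : (0:ℝ) ≤ (n:ℝ) := le_trans zero_le_one hn1
    have hμs : μ ≤ s := by
      have h0 : (0:ℝ) ≤ (n:ℝ) * ν ^ 2 := mul_nonneg hnn0 (sq_nonneg ν)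
      have h1 : μ ^ 2 ≤ s ^ 2 := by linarith [hesq]
      exact le_of_pow_le_pow_left₀ two_ne_zero hs0 h1
    have hνs : ν ≤ s := by
      have h0 : (0:ℝ) ≤ ((n:ℝ) - 1) * ν ^ 2 := mul_nonneg (by linarith) (sq_nonneg ν)
      have h1 : ν ^ 2 ≤ s ^ 2 := by nlinarith [hesq, sq_nonneg μ, h0]
      exact le_of_pow_le_pow_left₀ two_ne_zero hs0 h1
    -- the pre-projection iterate
    set y : Fin n → EuclideanSpace ℝ (Fin N) :=
      fun i => (1 - γ) • x k i + γ • (∑ j, W i j • x k j) with hy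
    have hx1i : ∀ i, x (k + 1) i = P (y i) := fun i => hiter k i
    -- decomposition of y i - xh
    have hyx : ∀ i, y i - xh = (1 - γ) • (x k i - xh) + γ • (∑ j, W i j • (x k j - xh)) := by
      intro i
      have hW1 : ∑ j, W i j • xh = xh := by
        rw [← Finset.sum_smul, hrow i, one_smul]
      have hWm : ∑ j, W i j • (x k j - xh) = (∑ j, W i j • x k j) - xh := by
        have : ∀ j, W i j • (x k j - xh) = W i j • x k j - W i j • xh := fun j => smul_sub _ _ _
        rw [Finset.sum_congr rfl fun j _ => this j, Finset.sum_sub_distrib, hW1]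
      have hγγ : (1 - γ) • xh + γ • xh = xh := by
        rw [← add_smul]
        norm_num
      have hrhs : (1 - γ) • (x k i - xh) + γ • ((∑ j, W i j • x k j) - xh)
          = ((1 - γ) • x k i + γ • (∑ j, W i j • x k j)) - ((1 - γ) • xh + γ • xh) := by
        rw [smul_sub, smul_sub]; abel
      show (1 - γ) • x k i + γ • (∑ j, W i j • x k j) - xh = _
      rw [hWm, hrhs, hγγ]
    -- contraction of the dispersion
    have hWs : stackNorm (fun i => ∑ j, W i j • (x k j - xh)) ≤ σ₂ * μ := by
      have := hσ (fun j => x k j - xh) (by rw [hxh] at *; exact mean_shift hn (x k))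
      rw [hμ]
      exact this
    have ha : stackNorm (fun i => y i - xh) ≤ ρt * μ := by
      have hre : (fun i => y i - xh)
          = fun i => (1 - γ) • (x k i - xh) + γ • (∑ j, W i j • (x k j - xh)) := by
        funext i; exact hyx i
      rw [hre]
      refine le_trans (sn_combo (1 - γ) γ _ _) ?_
      rw [abs_of_nonneg (by linarith : (0:ℝ) ≤ 1 - γ), abs_of_nonneg hγ0.le]
      have h2 : γ * stackNorm (fun i => ∑ j, W i j • (x k j - xh)) ≤ γ * (σ₂ * μ) :=
        mul_le_mul_of_nonneg_left hWs hγ0.le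
      have h3 : (1 - γ) * stackNorm (fun i => x k i - xh) = (1 - γ) * μ := by rw [hμ]
      rw [h3, hρt]
      linarith [h2]
    -- tube membership of the y i
    have hyin : ∀ i, ‖y i - xh‖ ≤ ρt * μ := fun i =>
      le_trans (comp_le_sn (fun i => y i - xh) i) ha
    have hyiR : ∀ i, infDist (y i) M ≤ ρt * μ + ν := by
      intro i
      calc infDist (y i) M ≤ infDist xh M + dist (y i) xh := infDist_le_infDist_add_dist
        _ = infDist xh M + ‖y i - xh‖ := by rw [dist_eq_norm]
        _ ≤ ν + (ρt * μ) := by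
            rw [← hνinf]
            have := hyin i
            linarith
        _ = ρt * μ + ν := by ring
    have hρμδ : ρt * μ ≤ δ := by
      have h4 := mul_le_mul_of_nonneg_right hρt1 hμ0
      linarith [h4, hμs, hsδ]
    have hνδ : ν ≤ δ := le_trans hνs hsδ
    have hyiRlt : ∀ i, infDist (y i) M < R := by
      intro i
      have h4 := hyiR i
      linarith [hρμδ, hνδ, hδR4]
    have hx1M : ∀ i, x (k + 1) i ∈ M := by
      intro i
      rw [hx1i i]
      exact (hP (y i) (hyiRlt i)).1
    refine ⟨hx1M, ?_⟩
    -- Lipschitz step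
    set D : ℝ := ρt * μ + 2 * ν with hD
    have hD3δ : D ≤ 3 * δ := by rw [hD]; linarith
    have h2RD : 0 < 2 * R - D := by linarith [hD3δ, hδR4, hδ0]
    have hPyi : ∀ i, ‖P (y i) - xb‖ * (2 * R - D) ≤ 2 * R * ‖y i - xh‖ := by
      intro i
      have hl := lip_ineq hMcompact hMne hR hP (hyiRlt i) hxhR
      rw [← hxb] at hl
      have hmono : ‖P (y i) - xb‖ * (2 * R - D)
          ≤ ‖P (y i) - xb‖ * (2 * R - infDist (y i) M - infDist xh M) := by
        apply mul_le_mul_of_nonneg_left _ (norm_nonneg _)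
        have h1 := hyiR i
        rw [← hνinf]
        rw [hD]
        linarith
      exact le_trans hmono hl
    -- sum the squares
    set E2 : ℝ := 2 * R * (ρt * μ) / (2 * R - D) with hE2
    have hE20 : 0 ≤ E2 := by
      apply div_nonneg _ h2RD.le
      have h9 : (0:ℝ) ≤ 2 * R * (ρt * μ) :=
        mul_nonneg (mul_nonneg (by linarith) hR.le) (mul_nonneg hρt0 hμ0)
      linarith [h9]
    have hsnext : stackNorm (fun i => P (y i) - xb) ≤ E2 := by
      apply sn_le hE20
      have hterm : ∀ i, ‖P (y i) - xb‖ ^ 2 ≤ (2 * R / (2 * R - D)) ^ 2 * ‖y i - xh‖ ^ 2 := by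
        intro i
        have h1 : ‖P (y i) - xb‖ ≤ 2 * R * ‖y i - xh‖ / (2 * R - D) := by
          rw [le_div_iff₀ h2RD]
          exact hPyi i
        have h2 : ‖P (y i) - xb‖ ^ 2 ≤ (2 * R * ‖y i - xh‖ / (2 * R - D)) ^ 2 :=
          pow_le_pow_left₀ (norm_nonneg _) h1 2
        calc ‖P (y i) - xb‖ ^ 2 ≤ (2 * R * ‖y i - xh‖ / (2 * R - D)) ^ 2 := h2
          _ = (2 * R / (2 * R - D)) ^ 2 * ‖y i - xh‖ ^ 2 := by ring
      calc ∑ i, ‖P (y i) - xb‖ ^ 2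
          ≤ ∑ i, (2 * R / (2 * R - D)) ^ 2 * ‖y i - xh‖ ^ 2 :=
            Finset.sum_le_sum fun i _ => hterm i
        _ = (2 * R / (2 * R - D)) ^ 2 * ∑ i, ‖y i - xh‖ ^ 2 := by rw [Finset.mul_sum]
        _ ≤ (2 * R / (2 * R - D)) ^ 2 * (ρt * μ) ^ 2 := by
            apply mul_le_mul_of_nonneg_left _ (by positivity)
            rw [← sn_sq]
            exact pow_le_pow_left₀ (sn_nonneg _) ha 2
        _ = E2 ^ 2 := by rw [hE2]; ring
    -- optimality of the new projected mean
    set xh' : EuclideanSpace ℝ (Fin N) := (n : ℝ)⁻¹ • ∑ j, x (k + 1) j with hxh'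
    have hcomp' : ∀ i, ‖x (k + 1) i - xb‖ ≤ E2 := by
      intro i
      rw [hx1i i]
      exact le_trans (comp_le_sn (fun i => P (y i) - xb) i) hsnext
    have hE2δ : E2 ≤ 8 / 5 * δ := by
      have h85 : 2 * R / (2 * R - D) ≤ 8 / 5 := by
        rw [div_le_iff₀ h2RD]
        linarith [hD3δ, hδR4]
      have h1 : E2 = (ρt * μ) * (2 * R / (2 * R - D)) := by rw [hE2]; ring
      rw [h1]
      have h2 : (ρt * μ) * (2 * R / (2 * R - D)) ≤ (ρt * μ) * (8 / 5) :=
        mul_le_mul_of_nonneg_left h85 (mul_nonneg hρt0 hμ0)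
      refine le_trans h2 (le_trans (mul_le_mul_of_nonneg_right hρμδ (by norm_num)) ?_)
      exact le_of_eq (by ring)
    have hxh'i : ∀ i, ‖xh' - x (k + 1) i‖ ≤ 2 * E2 := fun i =>
      mean_close hn (x (k + 1)) xb hcomp' i
    have hxh'tube : infDist xh' M ≤ 2 * E2 := by
      calc infDist xh' M ≤ dist xh' (x (k + 1) i₀) := infDist_le_dist_of_mem (hx1M i₀)
        _ = ‖xh' - x (k + 1) i₀‖ := dist_eq_norm _ _
        _ ≤ 2 * E2 := hxh'i i₀
    have hxh'R : infDist xh' M < R := by linarith [hE2δ, hxh'tube, hδR4, hδ0]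
    have hxb'M : P xh' ∈ M := (hP xh' hxh'R).1
    have hproj_opt : ‖xh' - P xh'‖ ≤ ‖xh' - xb‖ := by
      have h1 : ‖xh' - P xh'‖ = infDist xh' M := by
        rw [← dist_eq_norm, dist_comm]; exact (hP xh' hxh'R).2.1
      rw [h1, ← dist_eq_norm]
      exact infDist_le_dist_of_mem hxbM
    -- variance identity comparison
    have hvar1 := var_ident hn (x (k + 1)) (P xh')
    have hvar2 := var_ident hn (x (k + 1)) xb
    rw [← hxh'] at hvar1 hvar2
    have hsum_le : ∑ i, ‖x (k + 1) i - P xh'‖ ^ 2 ≤ ∑ i, ‖x (k + 1) i - xb‖ ^ 2 := by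
      rw [hvar1, hvar2]
      have h1 : ‖xh' - P xh'‖ ^ 2 ≤ ‖xh' - xb‖ ^ 2 :=
        pow_le_pow_left₀ (norm_nonneg _) hproj_opt 2
      have h2 : (n:ℝ) * ‖xh' - P xh'‖ ^ 2 ≤ (n:ℝ) * ‖xh' - xb‖ ^ 2 :=
        mul_le_mul_of_nonneg_left h1 (by positivity)
      linarith
    have hfeq : (fun i => x (k + 1) i - xb) = (fun i => P (y i) - xb) :=
      funext fun i => by rw [hx1i i]
    have hsnext' : stackNorm (fun i => x (k + 1) i - xb) ≤ E2 := by rw [hfeq]; exact hsnext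
    have hfinal1 : stackNorm (fun i => x (k + 1) i - P xh') ≤ E2 := by
      apply sn_le hE20
      calc ∑ i, ‖x (k + 1) i - P xh'‖ ^ 2 ≤ ∑ i, ‖x (k + 1) i - xb‖ ^ 2 := hsum_le
        _ = stackNorm (fun i => x (k + 1) i - xb) ^ 2 := (sn_sq _).symm
        _ ≤ E2 ^ 2 := pow_le_pow_left₀ (sn_nonneg _) hsnext' 2
    have hfin2 : E2 ≤ ρ₁ * s := by
      have halg := algIneq hn1 hR hδ0 hδR4 hμ0 hν0 hs0 hρt0 hρt1 hesq hnv hsδ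
      rw [hE2, hρ₁eq]
      rw [div_le_iff₀ h2RD]
      have hh : R * ρt / (R - δ) * s * (2 * R - D) = R * ρt * s * (2 * R - D) / (R - δ) := by
        ring
      rw [hh, le_div_iff₀ hRδ]
      have hmul := mul_le_mul_of_nonneg_left halg (mul_nonneg hR.le hρt0)
      rw [hD]
      linarith [hmul]
    exact le_trans hfinal1 hfin2
  -- induction for the invariant
  have inv : ∀ k, (∀ i, x k i ∈ M) ∧
      stackNorm (fun i => x k i - P ((n : ℝ)⁻¹ • ∑ j, x k j)) ≤ δ := by
    intro k
    induction k with
    | zero => exact ⟨hx0mem, hinit⟩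
    | succ k ih =>
      obtain ⟨h1, h2⟩ := key k ih.1 ih.2
      refine ⟨h1, ?_⟩
      calc stackNorm (fun i => x (k + 1) i - P ((n : ℝ)⁻¹ • ∑ j, x (k + 1) j))
          ≤ ρ₁ * stackNorm (fun i => x k i - P ((n : ℝ)⁻¹ • ∑ j, x k j)) := h2
        _ ≤ 1 * δ := by
            apply mul_le_mul (le_of_lt hρ₁lt1) ih.2 (sn_nonneg _) zero_le_one
        _ = δ := one_mul δ
  intro k
  exact (key k (inv k).1 (inv k).2).2
end

section
/- Distance between Euclidean mean and induced manifold mean: let M be an R-proximally smooth compact C²-submanifold and let M₂ = max over the closed R/2-tube of the operator norm of the second derivative (Hessian) of P_M. If x₁,…,x_n ∈ M satisfy ‖x_i − x̄‖ ≤ R/2 for all i, where x̂ = (1/n)∑x_i and x̄ = P_M(x̂), then ‖x̄ − x̂‖ ≤ (M₂/n) ∑_{i=1}^n ‖x_i − x̄‖². -/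
open scoped BigOperators

/-- distance between Euclidean mean and induced manifold mean:
let `M` be an `R`-proximally smooth compact `C²` set whose projection `P` is `C²` on
the open `R`-tube, and let `M₂` bound the operator norm of the second derivative of `P`
on the closed `R/2`-tube. If `x₁,…,x_n ∈ M` satisfy `‖x_i - x̄‖ ≤ R/2` for all `i`,
where `x̂ = (1/n) ∑ x_i` and `x̄ = P(x̂)`, then
`‖x̄ - x̂‖ ≤ (M₂/n) ∑ᵢ ‖x_i - x̄‖²`. -/
theorem stmt13 {n N : ℕ} (hn : 0 < n)
    (M : Set (EuclideanSpace ℝ (Fin N))) (hMcompact : IsCompact M) (hMne : M.Nonempty)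
    (R : ℝ) (hR : 0 < R)
    (P : EuclideanSpace ℝ (Fin N) → EuclideanSpace ℝ (Fin N))
    (hP : ∀ z, Metric.infDist z M < R →
      P z ∈ M ∧ dist (P z) z = Metric.infDist z M ∧
        ∀ y ∈ M, dist y z = Metric.infDist z M → y = P z)
    (hsmooth : ContDiffOn ℝ 2 P {z | Metric.infDist z M < R})
    (M₂ : ℝ) (hM₂0 : 0 ≤ M₂)
    (hM₂ : ∀ z, Metric.infDist z M ≤ R / 2 →
      ‖iteratedFDerivWithin ℝ 2 P {w | Metric.infDist w M < R} z‖ ≤ M₂)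
    (x : Fin n → EuclideanSpace ℝ (Fin N)) (hxM : ∀ i, x i ∈ M)
    (hclose : ∀ i, ‖x i - P ((n : ℝ)⁻¹ • ∑ j, x j)‖ ≤ R / 2) :
    ‖P ((n : ℝ)⁻¹ • ∑ j, x j) - (n : ℝ)⁻¹ • ∑ j, x j‖ ≤
      (M₂ / n) * ∑ i, ‖x i - P ((n : ℝ)⁻¹ • ∑ j, x j)‖ ^ 2 := by
  classical
  set xhat : EuclideanSpace ℝ (Fin N) := (n : ℝ)⁻¹ • ∑ j, x j with hxhat
  set xbar : EuclideanSpace ℝ (Fin N) := P xhat with hxbar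
  have hn' : (n : ℝ) ≠ 0 := Nat.cast_ne_zero.mpr hn.ne'
  have hnpos : (0 : ℝ) < n := Nat.cast_pos.mpr hn
  -- the mean satisfies `(n : ℝ) • xhat = ∑ x j`
  have hsum_smul : (n : ℝ) • xhat = ∑ j, x j := by
    rw [hxhat, smul_smul, mul_inv_cancel₀ hn', one_smul]
  have hsum0 : ∑ j, (x j - xhat) = 0 := by
    rw [Finset.sum_sub_distrib, Finset.sum_const, Finset.card_univ, Fintype.card_fin,
      ← Nat.cast_smul_eq_nsmul ℝ, hsum_smul, sub_self]
  -- the mean minimizes the sum of squared distances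
  have hvar : ∀ c : EuclideanSpace ℝ (Fin N),
      ∑ i, ‖x i - xhat‖ ^ 2 ≤ ∑ i, ‖x i - c‖ ^ 2 := by
    intro c
    have key : ∀ i : Fin n, ‖x i - c‖ ^ 2 =
        ‖x i - xhat‖ ^ 2 + 2 * (inner ℝ (x i - xhat) (xhat - c) : ℝ) + ‖xhat - c‖ ^ 2 := by
      intro i
      have h := @norm_add_sq_real (EuclideanSpace ℝ (Fin N)) _ _ (x i - xhat) (xhat - c)
      rw [sub_add_sub_cancel] at h
      exact h
    have hcross : ∑ i, (inner ℝ (x i - xhat) (xhat - c) : ℝ) = 0 := by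
      rw [← sum_inner, hsum0, inner_zero_left]
    have hsumkey : ∑ i, ‖x i - c‖ ^ 2 = ∑ i, ‖x i - xhat‖ ^ 2
        + 2 * ∑ i, (inner ℝ (x i - xhat) (xhat - c) : ℝ) + ∑ i : Fin n, ‖xhat - c‖ ^ 2 := by
      simp only [key]
      rw [Finset.sum_add_distrib, Finset.sum_add_distrib, Finset.mul_sum]
    have hnn : (0:ℝ) ≤ ∑ i : Fin n, ‖xhat - c‖ ^ 2 :=
      Finset.sum_nonneg fun i _ => sq_nonneg _
    rw [hsumkey, hcross]
    linarith
  -- some point is within R/2 of the mean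
  obtain ⟨i₀, hi₀⟩ : ∃ i, ‖x i - xhat‖ ≤ R / 2 := by
    by_contra h
    push_neg at h
    have h1 : ∑ i, ‖x i - xbar‖ ^ 2 ≤ ∑ i : Fin n, (R / 2) ^ 2 :=
      Finset.sum_le_sum fun i _ =>
        pow_le_pow_left₀ (norm_nonneg _) (hclose i) 2
    have h2 : ∑ i : Fin n, (R / 2) ^ 2 < ∑ i, ‖x i - xhat‖ ^ 2 := by
      refine Finset.sum_lt_sum_of_nonempty ?_ fun i _ => ?_
      · exact Finset.univ_nonempty_iff.mpr ⟨⟨0, hn⟩⟩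
      · exact pow_lt_pow_left₀ (h i) (by linarith) (by norm_num)
    have := hvar xbar
    linarith
  have htube : Metric.infDist xhat M < R := by
    have : Metric.infDist xhat M ≤ dist xhat (x i₀) :=
      Metric.infDist_le_dist_of_mem (hxM i₀)
    rw [dist_eq_norm, norm_sub_rev] at this
    linarith
  obtain ⟨hbarM, hbard, -⟩ := hP xhat htube
  -- projections of points of M are themselves
  have hPx : ∀ i, P (x i) = x i := by
    intro i
    have h0 : Metric.infDist (x i) M = 0 := Metric.infDist_zero_of_mem (hxM i)
    have := (hP (x i) (by rw [h0]; exact hR)).2.2 (x i) (hxM i) (by rw [h0, dist_self])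
    exact this.symm
  have hbar_close : ‖xhat - xbar‖ ≤ R / 2 := by
    have h1 : dist xbar xhat ≤ dist xhat (x i₀) := by
      rw [hbard]; exact Metric.infDist_le_dist_of_mem (hxM i₀)
    rw [dist_comm, dist_eq_norm, dist_eq_norm] at h1
    refine h1.trans ?_
    rw [norm_sub_rev]
    exact hi₀
  -- the tube and the ball
  set s : Set (EuclideanSpace ℝ (Fin N)) := {z | Metric.infDist z M < R} with hs
  have hso : IsOpen s := isOpen_lt (Metric.continuous_infDist_pt M) continuous_const
  set B : Set (EuclideanSpace ℝ (Fin N)) := Metric.closedBall xbar (R / 2) with hB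
  have hBhalf : ∀ z ∈ B, Metric.infDist z M ≤ R / 2 := fun z hz =>
    (Metric.infDist_le_dist_of_mem hbarM).trans (Metric.mem_closedBall.mp hz)
  have hBs : B ⊆ s := fun z hz => lt_of_le_of_lt (hBhalf z hz) (by linarith)
  have hxhatB : xhat ∈ B := by
    rw [hB, Metric.mem_closedBall, dist_eq_norm]; exact hbar_close
  have hxB : ∀ i, x i ∈ B := fun i => by
    rw [hB, Metric.mem_closedBall, dist_eq_norm]; exact hclose i
  -- derivatives
  have hfd : ∀ z ∈ s, HasFDerivAt P (fderiv ℝ P z) z := fun z hz =>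
    ((hsmooth.contDiffAt (hso.mem_nhds hz)).differentiableAt (by norm_num)).hasFDerivAt
  have hfd2 : ∀ z ∈ s, DifferentiableAt ℝ (fderiv ℝ P) z := fun z hz =>
    ((hsmooth.contDiffAt (hso.mem_nhds hz)).fderiv_right (m := 1) (by norm_num)).differentiableAt
      (by norm_num)
  have hbound : ∀ z ∈ B, ‖fderiv ℝ (fderiv ℝ P) z‖ ≤ M₂ := by
    intro z hz
    calc ‖fderiv ℝ (fderiv ℝ P) z‖
        = ‖iteratedFDeriv ℝ 0 (fderiv ℝ (fderiv ℝ P)) z‖ := (norm_iteratedFDeriv_zero (f := fderiv ℝ (fderiv ℝ P)) (x := z)).symm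
      _ = ‖iteratedFDeriv ℝ 1 (fderiv ℝ P) z‖ := norm_iteratedFDeriv_fderiv
      _ = ‖iteratedFDeriv ℝ 2 P z‖ := norm_iteratedFDeriv_fderiv
      _ = ‖iteratedFDerivWithin ℝ 2 P s z‖ := by
          rw [iteratedFDerivWithin_of_isOpen 2 hso (hBs hz)]
      _ ≤ M₂ := hM₂ z (hBhalf z hz)
  -- Lipschitz estimate for the derivative of P on B
  have hlip : ∀ z ∈ B, ‖fderiv ℝ P z - fderiv ℝ P xhat‖ ≤ M₂ * ‖z - xhat‖ := by
    intro z hz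
    exact (convex_closedBall _ _).norm_image_sub_le_of_norm_hasFDerivWithin_le
      (fun w hw => ((hfd2 w (hBs hw)).hasFDerivAt).hasFDerivWithinAt)
      (fun w hw => hbound w hw) hxhatB hz
  set L : EuclideanSpace ℝ (Fin N) →L[ℝ] EuclideanSpace ℝ (Fin N) := fderiv ℝ P xhat with hL
  -- Taylor-type estimate at each x i
  have hTay : ∀ i, ‖(x i - xbar) - L (x i - xhat)‖ ≤ M₂ * ‖x i - xhat‖ ^ 2 := by
    intro i
    set Si : Set (EuclideanSpace ℝ (Fin N)) :=
      Metric.closedBall xhat ‖x i - xhat‖ ∩ B with hSi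
    have hconv : Convex ℝ Si := (convex_closedBall _ _).inter (convex_closedBall _ _)
    have hxhatSi : xhat ∈ Si :=
      ⟨Metric.mem_closedBall.mpr (by rw [dist_self]; exact norm_nonneg _), hxhatB⟩
    have hxiSi : x i ∈ Si :=
      ⟨Metric.mem_closedBall.mpr (by rw [dist_eq_norm]), hxB i⟩
    have hg : ∀ z ∈ Si, HasFDerivWithinAt (fun y => P y - L y) (fderiv ℝ P z - L) Si z :=
      fun z hz => ((hfd z (hBs hz.2)).sub (L.hasFDerivAt)).hasFDerivWithinAt
    have hgb : ∀ z ∈ Si, ‖fderiv ℝ P z - L‖ ≤ M₂ * ‖x i - xhat‖ := by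
      intro z hz
      refine (hlip z hz.2).trans (mul_le_mul_of_nonneg_left ?_ hM₂0)
      have := Metric.mem_closedBall.mp hz.1
      rwa [dist_eq_norm] at this
    have := hconv.norm_image_sub_le_of_norm_hasFDerivWithin_le hg hgb hxhatSi hxiSi
    have heq : (fun y => P y - L y) (x i) - (fun y => P y - L y) xhat
        = (x i - xbar) - L (x i - xhat) := by
      simp only [hPx i, ← hxbar, map_sub]
      abel
    rw [heq] at this
    calc ‖(x i - xbar) - L (x i - xhat)‖ ≤ M₂ * ‖x i - xhat‖ * ‖x i - xhat‖ := this
      _ = M₂ * ‖x i - xhat‖ ^ 2 := by ring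
  -- assemble
  have hkey : (n : ℝ) • (xhat - xbar) = ∑ i, ((x i - xbar) - L (x i - xhat)) := by
    rw [Finset.sum_sub_distrib, ← map_sum, hsum0, map_zero, sub_zero,
      Finset.sum_sub_distrib, Finset.sum_const, Finset.card_univ, Fintype.card_fin,
      ← Nat.cast_smul_eq_nsmul ℝ, ← hsum_smul, smul_sub]
  have hnorm : (n : ℝ) * ‖xhat - xbar‖ ≤ M₂ * ∑ i, ‖x i - xbar‖ ^ 2 := by
    have h1 : ‖(n : ℝ) • (xhat - xbar)‖ ≤ ∑ i, ‖(x i - xbar) - L (x i - xhat)‖ := by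
      rw [hkey]; exact norm_sum_le _ _
    have h2 : ∑ i, ‖(x i - xbar) - L (x i - xhat)‖ ≤ M₂ * ∑ i, ‖x i - xhat‖ ^ 2 := by
      rw [Finset.mul_sum]
      exact Finset.sum_le_sum fun i _ => hTay i
    have h3 : M₂ * ∑ i, ‖x i - xhat‖ ^ 2 ≤ M₂ * ∑ i, ‖x i - xbar‖ ^ 2 :=
      mul_le_mul_of_nonneg_left (hvar xbar) hM₂0
    have h4 : ‖(n : ℝ) • (xhat - xbar)‖ = (n : ℝ) * ‖xhat - xbar‖ := by
      rw [norm_smul, Real.norm_natCast]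
    linarith
  have hgoal : ‖xbar - xhat‖ ≤ (M₂ / n) * ∑ i, ‖x i - xbar‖ ^ 2 := by
    rw [norm_sub_rev, div_mul_eq_mul_div, le_div_iff₀ hnpos]
    calc ‖xhat - xbar‖ * n = (n : ℝ) * ‖xhat - xbar‖ := by ring
      _ ≤ M₂ * ∑ i, ‖x i - xbar‖ ^ 2 := hnorm
  exact hgoal
end

section
/- Consensus error contraction with perturbation for the compressed algorithm: let M be R-proximally smooth compact submanifold, W̃ = (1−γ)I + γW with the single-step contraction ‖x_{k+1} − x̄_{k+1}‖ ≤ ρ₁‖x_k − x̄_k‖ available for the unperturbed update (ρ₁ < 1, ρ̂ = 1 − ρ₁). Suppose ‖x_k − x̄_k‖ ≤ δ and the perturbation e_k = γ(W−I)(x̃_k − x_k) + η v_k satisfies ‖e_k‖ ≤ R/2 − δ, with x_{k+1} = P_{M^n}(W̃ x_k + e_k). Then ‖x_{k+1} − x̄_{k+1}‖² ≤ (1 − ρ̂/2)‖x_k − x̄_k‖² + (16/ρ̂)‖e_k‖², and hence ‖x_{k+1} − x̄_{k+1}‖² ≤ (1 − ρ̂/2)‖x_k − x̄_k‖² + (64γ²/ρ̂)‖x̃_k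 − x_k‖² + (16η²/ρ̂)‖v_k‖². -/
open scoped BigOperators

section aux

lemma stackNorm_nonneg {n N : ℕ} (z : Fin n → EuclideanSpace ℝ (Fin N)) : 0 ≤ stackNorm z :=
  Real.sqrt_nonneg _

lemma sq_stackNorm {n N : ℕ} (z : Fin n → EuclideanSpace ℝ (Fin N)) :
    stackNorm z ^ 2 = ∑ i, ‖z i‖ ^ 2 := by
  rw [stackNorm, Real.sq_sqrt]
  positivity

lemma stackNorm_eq_norm {n N : ℕ} (z : Fin n → EuclideanSpace ℝ (Fin N)) :
    stackNorm z = ‖(WithLp.equiv 2 (∀ _ : Fin n, EuclideanSpace ℝ (Fin N))).symm z‖ := by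
  rw [stackNorm, ← PiLp.norm_sq_eq_of_L2]
  exact Real.sqrt_sq (norm_nonneg _)

lemma stackNorm_triangle {n N : ℕ} (f g : Fin n → EuclideanSpace ℝ (Fin N)) :
    stackNorm (fun i => f i + g i) ≤ stackNorm f + stackNorm g := by
  rw [stackNorm_eq_norm, stackNorm_eq_norm, stackNorm_eq_norm]
  exact norm_add_le _ _

lemma stackNorm_mono {n N : ℕ} (f g : Fin n → EuclideanSpace ℝ (Fin N))
    (h : ∀ i, ‖f i‖ ≤ ‖g i‖) : stackNorm f ≤ stackNorm g := by
  apply Real.sqrt_le_sqrt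
  apply Finset.sum_le_sum
  intro i _
  exact pow_le_pow_left₀ (norm_nonneg _) (h i) 2

lemma comp_le_stackNorm {n N : ℕ} (f : Fin n → EuclideanSpace ℝ (Fin N)) (i : Fin n) :
    ‖f i‖ ≤ stackNorm f := by
  have h1 : ‖f i‖ ^ 2 ≤ ∑ j, ‖f j‖ ^ 2 :=
    Finset.single_le_sum (f := fun j => ‖f j‖ ^ 2) (fun j _ => by positivity) (Finset.mem_univ i)
  calc ‖f i‖ = Real.sqrt (‖f i‖ ^ 2) := (Real.sqrt_sq (norm_nonneg _)).symm
    _ ≤ stackNorm f := Real.sqrt_le_sqrt h1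

lemma stackNorm_smul {n N : ℕ} (c : ℝ) (f : Fin n → EuclideanSpace ℝ (Fin N)) :
    stackNorm (fun i => c • f i) = |c| * stackNorm f := by
  rw [stackNorm, stackNorm]
  simp_rw [norm_smul, Real.norm_eq_abs, mul_pow, ← Finset.mul_sum, Real.sqrt_mul (sq_nonneg _),
    Real.sqrt_sq_eq_abs, abs_abs]

lemma young2 (a b l : ℝ) (h1 : 0 < l) (h2 : l < 1) :
    (a + b) ^ 2 ≤ a ^ 2 / l + b ^ 2 / (1 - l) := by
  have h3 : 0 < 1 - l := by linarith
  rw [div_add_div _ _ h1.ne' h3.ne', le_div_iff₀ (by positivity)]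
  nlinarith [sq_nonneg (a * (1 - l) - b * l)]

lemma num1 (r s E T : ℝ) (hr0 : 0 < r) (hr1 : r ≤ 1)
    (hT0 : 0 ≤ T) (hT : T ≤ (1 - r) * s + 2 * E) :
    T ^ 2 ≤ (1 - r / 2) * s ^ 2 + (16 / r) * E ^ 2 := by
  have h3 : 0 < 1 - r / 2 := by linarith
  have h4 : 1 - r / 2 < 1 := by linarith
  have key := young2 ((1 - r) * s) (2 * E) (1 - r / 2) h3 h4
  have hTsq : T ^ 2 ≤ ((1 - r) * s + 2 * E) ^ 2 := by nlinarith
  have e1 : ((1 - r) * s) ^ 2 / (1 - r / 2) ≤ (1 - r / 2) * s ^ 2 := by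
    rw [div_le_iff₀ h3]
    nlinarith [sq_nonneg (s * r)]
  have e2 : (2 * E) ^ 2 / (1 - (1 - r / 2)) ≤ (16 / r) * E ^ 2 := by
    have h5 : 1 - (1 - r / 2) = r / 2 := by ring
    rw [h5, div_le_iff₀ (by positivity)]
    have h6 : 16 / r * E ^ 2 * (r / 2) = 8 * E ^ 2 := by field_simp; ring
    rw [h6]
    nlinarith [sq_nonneg E]
  linarith

lemma num2 (r s D V T g e : ℝ) (hr0 : 0 < r) (hr1 : r ≤ 1)
    (hT0 : 0 ≤ T) (hT : T ≤ (1 - r) * s + (4 * g * D + 2 * e * V)) :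
    T ^ 2 ≤ (1 - r / 2) * s ^ 2 + (64 * g ^ 2 / r) * D ^ 2 + (16 * e ^ 2 / r) * V ^ 2 := by
  have h3 : 0 < 1 - r / 2 := by linarith
  have h4 : 1 - r / 2 < 1 := by linarith
  have key := young2 ((1 - r) * s) (4 * g * D + 2 * e * V) (1 - r / 2) h3 h4
  have hTsq : T ^ 2 ≤ ((1 - r) * s + (4 * g * D + 2 * e * V)) ^ 2 := by nlinarith
  have e1 : ((1 - r) * s) ^ 2 / (1 - r / 2) ≤ (1 - r / 2) * s ^ 2 := by
    rw [div_le_iff₀ h3]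
    nlinarith [sq_nonneg (s * r)]
  have e2 : (4 * g * D + 2 * e * V) ^ 2 / (1 - (1 - r / 2)) ≤
      (64 * g ^ 2 / r) * D ^ 2 + (16 * e ^ 2 / r) * V ^ 2 := by
    have h5 : 1 - (1 - r / 2) = r / 2 := by ring
    rw [h5, div_le_iff₀ (by positivity)]
    have expand : ((64 * g ^ 2 / r) * D ^ 2 + (16 * e ^ 2 / r) * V ^ 2) * (r / 2) =
        32 * (g * D) ^ 2 + 8 * (e * V) ^ 2 := by
      field_simp; ring
    rw [expand]
    nlinarith [sq_nonneg (2 * g * D - e * V)]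
  linarith

variable {F : Type*} [NormedAddCommGroup F] [InnerProductSpace ℝ F]

lemma mean_sub_const {n : ℕ} (hn : 0 < n) (z : Fin n → F) (c : F) :
    (n : ℝ)⁻¹ • (∑ i, z i) - c = (n : ℝ)⁻¹ • ∑ i, (z i - c) := by
  have hn' : (n : ℝ) ≠ 0 := Nat.cast_ne_zero.mpr hn.ne'
  rw [Finset.sum_sub_distrib, Finset.sum_const, Finset.card_univ, Fintype.card_fin,
    ← Nat.cast_smul_eq_nsmul ℝ, smul_sub, smul_smul, inv_mul_cancel₀ hn', one_smul]

lemma norm_mean_sub_const_le {n : ℕ} (hn : 0 < n) (z : Fin n → F) (c : F) (b : ℝ)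
    (h : ∀ i, ‖z i - c‖ ≤ b) : ‖(n : ℝ)⁻¹ • (∑ i, z i) - c‖ ≤ b := by
  have hn' : (0 : ℝ) < n := Nat.cast_pos.mpr hn
  rw [mean_sub_const hn, norm_smul, Real.norm_eq_abs, abs_of_nonneg (by positivity)]
  calc (n : ℝ)⁻¹ * ‖∑ i, (z i - c)‖ ≤ (n : ℝ)⁻¹ * ∑ i, ‖z i - c‖ := by
        exact mul_le_mul_of_nonneg_left (norm_sum_le _ _) (by positivity)
    _ ≤ (n : ℝ)⁻¹ * ∑ _i : Fin n, b := by
        refine mul_le_mul_of_nonneg_left (Finset.sum_le_sum fun i _ => h i) (by positivity)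
    _ = b := by
        rw [Finset.sum_const, Finset.card_univ, Fintype.card_fin, nsmul_eq_mul,
          ← mul_assoc, inv_mul_cancel₀ hn'.ne', one_mul]

lemma sum_dist_sq_min {n : ℕ} (hn : 0 < n) (z : Fin n → F) (u w : F)
    (h : ‖(n : ℝ)⁻¹ • ∑ i, z i - u‖ ≤ ‖(n : ℝ)⁻¹ • ∑ i, z i - w‖) :
    ∑ i, ‖z i - u‖ ^ 2 ≤ ∑ i, ‖z i - w‖ ^ 2 := by
  set m : F := (n : ℝ)⁻¹ • ∑ i, z i with hm
  have hn' : (n : ℝ) ≠ 0 := Nat.cast_ne_zero.mpr hn.ne'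
  have hsum : ∑ i, (z i - m) = 0 := by
    rw [Finset.sum_sub_distrib, Finset.sum_const, Finset.card_univ, Fintype.card_fin, hm,
      ← Nat.cast_smul_eq_nsmul ℝ, smul_smul, mul_inv_cancel₀ hn', one_smul, sub_self]
  have key : ∀ c : F, ∑ i, ‖z i - c‖ ^ 2 = (∑ i, ‖z i - m‖ ^ 2) + n * ‖m - c‖ ^ 2 := by
    intro c
    have hpt : ∀ i, ‖z i - c‖ ^ 2
        = ‖z i - m‖ ^ 2 + 2 * inner ℝ (z i - m) (m - c) + ‖m - c‖ ^ 2 := by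
      intro i
      rw [← norm_add_sq_real]
      congr 1
      abel
    simp_rw [hpt]
    rw [Finset.sum_add_distrib, Finset.sum_add_distrib, Finset.sum_const, Finset.card_univ,
      Fintype.card_fin]
    have hcross : ∑ i, 2 * (inner ℝ (z i - m) (m - c) : ℝ)
        = 2 * inner ℝ (∑ i, (z i - m)) (m - c) := by
      rw [← Finset.mul_sum, sum_inner]
    rw [hcross, hsum, inner_zero_left, mul_zero, add_zero, nsmul_eq_mul]
  rw [key u, key w]
  have hsq : ‖m - u‖ ^ 2 ≤ ‖m - w‖ ^ 2 := pow_le_pow_left₀ (norm_nonneg _) h 2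
  nlinarith [Nat.cast_nonneg (α := ℝ) n]

end aux

/-- consensus error contraction with perturbation, compressed algorithm:
let `M` be `R`-proximally smooth compact with projection `P` (`2`-Lipschitz on the
`R/2`-tube), `W̃ = (1-γ)I + γW`, with the single-step contraction
`‖P(W̃ x) - x̄‖ ≤ ρ₁ ‖x - x̄‖` available for the unperturbed update (`ρ₁ < 1`,
`ρ̂ = 1 - ρ₁`). Suppose `‖x - x̄‖ ≤ δ` and the perturbation
`e = γ (W - I)(x̃ - x) + η v` satisfies `‖e‖ ≤ R/2 - δ`, with
`x⁺ = P_{M^n}(W̃ x + e)`. Then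
`‖x⁺ - x̄⁺‖² ≤ (1 - ρ̂/2) ‖x - x̄‖² + (16/ρ̂) ‖e‖²`, and hence
`‖x⁺ - x̄⁺‖² ≤ (1 - ρ̂/2) ‖x - x̄‖² + (64γ²/ρ̂) ‖x̃ - x‖² + (16η²/ρ̂) ‖v‖²`. -/
theorem stmt15 {n N : ℕ} (hn : 0 < n)
    (M : Set (EuclideanSpace ℝ (Fin N))) (hMcompact : IsCompact M) (hMne : M.Nonempty)
    (R : ℝ) (hR : 0 < R)
    (P : EuclideanSpace ℝ (Fin N) → EuclideanSpace ℝ (Fin N))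
    (hP : ∀ z, Metric.infDist z M < R →
      P z ∈ M ∧ dist (P z) z = Metric.infDist z M ∧
        ∀ y ∈ M, dist y z = Metric.infDist z M → y = P z)
    (hlip2 : ∀ a b, Metric.infDist a M ≤ R / 2 → Metric.infDist b M ≤ R / 2 →
      ‖P a - P b‖ ≤ 2 * ‖a - b‖)
    (W : Matrix (Fin n) (Fin n) ℝ) (hsymm : W.IsSymm) (hnn : ∀ i j, 0 ≤ W i j)
    (hrow : ∀ i, ∑ j, W i j = 1)
    (γ : ℝ) (hγ0 : 0 < γ) (hγ1 : γ ≤ 1)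
    (η : ℝ) (hη : 0 ≤ η)
    (ρhat : ℝ) (hρ0 : 0 < ρhat) (hρ1 : ρhat ≤ 1)
    (δ : ℝ) (hδ0 : 0 < δ) (hδR : δ < R / 2)
    (x xt v : Fin n → EuclideanSpace ℝ (Fin N)) (hxM : ∀ i, x i ∈ M)
    -- the single-step contraction of the unperturbed projected consensus update
    (hcontr : stackNorm (fun i =>
        P ((1 - γ) • x i + γ • (∑ j, W i j • x j)) - P ((n : ℝ)⁻¹ • ∑ j, x j)) ≤
      (1 - ρhat) * stackNorm (fun i => x i - P ((n : ℝ)⁻¹ • ∑ j, x j)))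
    (hclose : stackNorm (fun i => x i - P ((n : ℝ)⁻¹ • ∑ j, x j)) ≤ δ)
    (e : Fin n → EuclideanSpace ℝ (Fin N))
    (he : ∀ i, e i = γ • ((∑ j, W i j • (xt j - x j)) - (xt i - x i)) + η • v i)
    (hebound : stackNorm e ≤ R / 2 - δ)
    (xnext : Fin n → EuclideanSpace ℝ (Fin N))
    (hnext : ∀ i, xnext i = P ((1 - γ) • x i + γ • (∑ j, W i j • x j) + e i)) :
    stackNorm (fun i => xnext i - P ((n : ℝ)⁻¹ • ∑ j, xnext j)) ^ 2 ≤
      (1 - ρhat / 2) * stackNorm (fun i => x i - P ((n : ℝ)⁻¹ • ∑ j, x j)) ^ 2 +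
        (16 / ρhat) * stackNorm e ^ 2 ∧
    stackNorm (fun i => xnext i - P ((n : ℝ)⁻¹ • ∑ j, xnext j)) ^ 2 ≤
      (1 - ρhat / 2) * stackNorm (fun i => x i - P ((n : ℝ)⁻¹ • ∑ j, x j)) ^ 2 +
        (64 * γ ^ 2 / ρhat) * stackNorm (fun i => xt i - x i) ^ 2 +
        (16 * η ^ 2 / ρhat) * stackNorm v ^ 2 := by
  -- abbreviations
  set m : EuclideanSpace ℝ (Fin N) := (n : ℝ)⁻¹ • ∑ j, x j with hm
  set p : EuclideanSpace ℝ (Fin N) := P m with hp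
  set mp : EuclideanSpace ℝ (Fin N) := (n : ℝ)⁻¹ • ∑ j, xnext j with hmp
  set q : EuclideanSpace ℝ (Fin N) := P mp with hq
  set s : ℝ := stackNorm (fun i => x i - p) with hsdef
  set Ee : ℝ := stackNorm e with hEdef
  have hs0 : 0 ≤ s := stackNorm_nonneg _
  have hE0 : 0 ≤ Ee := stackNorm_nonneg _
  have hEδ : Ee ≤ R / 2 - δ := hebound
  have hγ1' : 0 ≤ 1 - γ := by linarith
  have hcomp : ∀ i, ‖x i - p‖ ≤ δ := fun i =>
    (comp_le_stackNorm (fun i => x i - p) i).trans hclose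
  have hcompE : ∀ i, ‖e i‖ ≤ Ee := fun i => comp_le_stackNorm e i
  -- the old projected mean is in M
  have i0 : Fin n := ⟨0, hn⟩
  have hmx0 : ‖m - x i0‖ ≤ 2 * δ := by
    refine norm_mean_sub_const_le hn x (x i0) (2 * δ) fun i => ?_
    have h1 : x i - x i0 = (x i - p) - (x i0 - p) := by abel
    rw [h1]
    calc ‖(x i - p) - (x i0 - p)‖ ≤ ‖x i - p‖ + ‖x i0 - p‖ := norm_sub_le _ _
      _ ≤ 2 * δ := by linarith [hcomp i, hcomp i0]
  have hdm : Metric.infDist m M < R := by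
    calc Metric.infDist m M ≤ dist m (x i0) := Metric.infDist_le_dist_of_mem (hxM i0)
      _ = ‖m - x i0‖ := dist_eq_norm _ _
      _ ≤ 2 * δ := hmx0
      _ < R := by linarith
  obtain ⟨hpM, hpdist, -⟩ := hP m hdm
  -- the unperturbed averaged points stay close to p
  have hWtp : ∀ i, ((1 - γ) • x i + γ • (∑ j, W i j • x j)) - p
      = (1 - γ) • (x i - p) + γ • (∑ j, W i j • (x j - p)) := by
    intro i
    have h1 : ∑ j, W i j • (x j - p) = (∑ j, W i j • x j) - p := by
      simp_rw [smul_sub]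
      rw [Finset.sum_sub_distrib, ← Finset.sum_smul, hrow, one_smul]
    rw [h1]
    module
  have hWtnorm : ∀ i, ‖((1 - γ) • x i + γ • (∑ j, W i j • x j)) - p‖ ≤ δ := by
    intro i
    rw [hWtp i]
    have hsum : ‖∑ j, W i j • (x j - p)‖ ≤ δ := by
      calc ‖∑ j, W i j • (x j - p)‖ ≤ ∑ j, ‖W i j • (x j - p)‖ := norm_sum_le _ _
        _ = ∑ j, W i j * ‖x j - p‖ := by
            refine Finset.sum_congr rfl fun j _ => ?_
            rw [norm_smul, Real.norm_eq_abs, abs_of_nonneg (hnn i j)]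
        _ ≤ ∑ j, W i j * δ := Finset.sum_le_sum fun j _ =>
            mul_le_mul_of_nonneg_left (hcomp j) (hnn i j)
        _ = δ := by rw [← Finset.sum_mul, hrow, one_mul]
    calc ‖(1 - γ) • (x i - p) + γ • (∑ j, W i j • (x j - p))‖
        ≤ ‖(1 - γ) • (x i - p)‖ + ‖γ • (∑ j, W i j • (x j - p))‖ := norm_add_le _ _
      _ = (1 - γ) * ‖x i - p‖ + γ * ‖∑ j, W i j • (x j - p)‖ := by
          rw [norm_smul, norm_smul, Real.norm_eq_abs, Real.norm_eq_abs,
            abs_of_nonneg hγ1', abs_of_nonneg hγ0.le]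
      _ ≤ (1 - γ) * δ + γ * δ := by
          have := hcomp i
          gcongr
      _ = δ := by ring
  -- componentwise Lipschitz comparison with the unperturbed update
  have hlipcomp : ∀ i, ‖xnext i - P ((1 - γ) • x i + γ • (∑ j, W i j • x j))‖
      ≤ 2 * ‖e i‖ := by
    intro i
    rw [hnext i]
    have hd1 : Metric.infDist ((1 - γ) • x i + γ • (∑ j, W i j • x j) + e i) M ≤ R / 2 := by
      calc Metric.infDist ((1 - γ) • x i + γ • (∑ j, W i j • x j) + e i) M
          ≤ dist ((1 - γ) • x i + γ • (∑ j, W i j • x j) + e i) p :=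
            Metric.infDist_le_dist_of_mem hpM
        _ = ‖(((1 - γ) • x i + γ • (∑ j, W i j • x j)) - p) + e i‖ := by
            rw [dist_eq_norm]; congr 1; abel
        _ ≤ ‖((1 - γ) • x i + γ • (∑ j, W i j • x j)) - p‖ + ‖e i‖ := norm_add_le _ _
        _ ≤ δ + Ee := add_le_add (hWtnorm i) (hcompE i)
        _ ≤ R / 2 := by linarith
    have hd2 : Metric.infDist ((1 - γ) • x i + γ • (∑ j, W i j • x j)) M ≤ R / 2 := by
      calc Metric.infDist ((1 - γ) • x i + γ • (∑ j, W i j • x j)) M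
          ≤ dist ((1 - γ) • x i + γ • (∑ j, W i j • x j)) p :=
            Metric.infDist_le_dist_of_mem hpM
        _ = ‖((1 - γ) • x i + γ • (∑ j, W i j • x j)) - p‖ := dist_eq_norm _ _
        _ ≤ δ := hWtnorm i
        _ ≤ R / 2 := by linarith
    have := hlip2 _ _ hd1 hd2
    calc ‖P ((1 - γ) • x i + γ • (∑ j, W i j • x j) + e i)
          - P ((1 - γ) • x i + γ • (∑ j, W i j • x j))‖
        ≤ 2 * ‖((1 - γ) • x i + γ • (∑ j, W i j • x j) + e i)
          - ((1 - γ) • x i + γ • (∑ j, W i j • x j))‖ := this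
      _ = 2 * ‖e i‖ := by rw [add_sub_cancel_left]
  -- stacked distance of the new iterate to the old projected mean
  have hstA : stackNorm (fun i => xnext i - p) ≤ (1 - ρhat) * s + 2 * Ee := by
    have hsplit : (fun i => xnext i - p)
        = fun i => (xnext i - P ((1 - γ) • x i + γ • (∑ j, W i j • x j)))
          + (P ((1 - γ) • x i + γ • (∑ j, W i j • x j)) - p) := by
      funext i; abel
    rw [hsplit]
    calc stackNorm (fun i => (xnext i - P ((1 - γ) • x i + γ • (∑ j, W i j • x j)))
          + (P ((1 - γ) • x i + γ • (∑ j, W i j • x j)) - p))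
        ≤ stackNorm (fun i => xnext i - P ((1 - γ) • x i + γ • (∑ j, W i j • x j)))
          + stackNorm (fun i => P ((1 - γ) • x i + γ • (∑ j, W i j • x j)) - p) :=
          stackNorm_triangle _ _
      _ ≤ 2 * Ee + (1 - ρhat) * s := by
          refine add_le_add ?_ hcontr
          calc stackNorm (fun i => xnext i - P ((1 - γ) • x i + γ • (∑ j, W i j • x j)))
              ≤ stackNorm (fun i => (2 : ℝ) • e i) := by
                refine stackNorm_mono _ _ fun i => ?_
                rw [norm_smul, Real.norm_eq_abs]
                calc ‖xnext i - P ((1 - γ) • x i + γ • (∑ j, W i j • x j))‖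
                    ≤ 2 * ‖e i‖ := hlipcomp i
                  _ = |(2 : ℝ)| * ‖e i‖ := by norm_num
            _ = 2 * Ee := by rw [stackNorm_smul]; norm_num; rfl
      _ = (1 - ρhat) * s + 2 * Ee := by ring
  have hρs : (1 - ρhat) * s ≤ δ := by
    calc (1 - ρhat) * s ≤ 1 * s := by
          refine mul_le_mul_of_nonneg_right ?_ hs0; linarith
      _ = s := one_mul s
      _ ≤ δ := hclose
  -- the new mean is near M
  have hmpp : ‖mp - p‖ ≤ (1 - ρhat) * s + 2 * Ee := by
    refine norm_mean_sub_const_le hn xnext p _ fun i => ?_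
    exact (comp_le_stackNorm (fun i => xnext i - p) i).trans hstA
  have hdmp : Metric.infDist mp M < R := by
    calc Metric.infDist mp M ≤ dist mp p := Metric.infDist_le_dist_of_mem hpM
      _ = ‖mp - p‖ := dist_eq_norm _ _
      _ ≤ (1 - ρhat) * s + 2 * Ee := hmpp
      _ ≤ δ + 2 * (R / 2 - δ) := by linarith
      _ < R := by linarith
  obtain ⟨hqM, hqdist, -⟩ := hP mp hdmp
  -- the projected new mean is a better center than p
  have hvar : ∑ i, ‖xnext i - q‖ ^ 2 ≤ ∑ i, ‖xnext i - p‖ ^ 2 := by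
    refine sum_dist_sq_min hn xnext q p ?_
    calc ‖mp - q‖ = dist q mp := by rw [dist_comm, dist_eq_norm]
      _ = Metric.infDist mp M := hqdist
      _ ≤ dist mp p := Metric.infDist_le_dist_of_mem hpM
      _ = ‖mp - p‖ := dist_eq_norm _ _
  have hT : stackNorm (fun i => xnext i - q) ≤ (1 - ρhat) * s + 2 * Ee := by
    calc stackNorm (fun i => xnext i - q) ≤ stackNorm (fun i => xnext i - p) :=
          Real.sqrt_le_sqrt hvar
      _ ≤ (1 - ρhat) * s + 2 * Ee := hstA
  have hT0 : 0 ≤ stackNorm (fun i => xnext i - q) := stackNorm_nonneg _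
  constructor
  · exact num1 ρhat s Ee _ hρ0 hρ1 hT0 hT
  · -- bound the perturbation by the compression error and v
    set D : ℝ := stackNorm (fun i => xt i - x i) with hDdef
    set V : ℝ := stackNorm v with hVdef
    have hWd : stackNorm (fun i => ∑ j, W i j • (xt j - x j)) ≤ D := by
      apply Real.sqrt_le_sqrt
      have hpoint : ∀ i, ‖∑ j, W i j • (xt j - x j)‖ ^ 2
          ≤ ∑ j, W i j * ‖xt j - x j‖ ^ 2 := by
        intro i
        have h1 : ‖∑ j, W i j • (xt j - x j)‖ ≤ ∑ j, W i j * ‖xt j - x j‖ := by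
          calc ‖∑ j, W i j • (xt j - x j)‖ ≤ ∑ j, ‖W i j • (xt j - x j)‖ := norm_sum_le _ _
            _ = ∑ j, W i j * ‖xt j - x j‖ := by
                refine Finset.sum_congr rfl fun j _ => ?_
                rw [norm_smul, Real.norm_eq_abs, abs_of_nonneg (hnn i j)]
        have h2 : (∑ j, W i j * ‖xt j - x j‖) ^ 2 ≤ ∑ j, W i j * ‖xt j - x j‖ ^ 2 := by
          have hcs := Finset.sum_mul_sq_le_sq_mul_sq Finset.univ
            (fun j => Real.sqrt (W i j)) (fun j => Real.sqrt (W i j) * ‖xt j - x j‖)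
          have h3 : ∀ j, Real.sqrt (W i j) * (Real.sqrt (W i j) * ‖xt j - x j‖)
              = W i j * ‖xt j - x j‖ := by
            intro j
            rw [← mul_assoc, Real.mul_self_sqrt (hnn i j)]
          have h4 : ∀ j, Real.sqrt (W i j) ^ 2 = W i j := fun j => Real.sq_sqrt (hnn i j)
          have h5 : ∀ j, (Real.sqrt (W i j) * ‖xt j - x j‖) ^ 2
              = W i j * ‖xt j - x j‖ ^ 2 := by
            intro j
            rw [mul_pow, Real.sq_sqrt (hnn i j)]
          simp_rw [h3, h4, h5, hrow i, one_mul] at hcs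
          exact hcs
        calc ‖∑ j, W i j • (xt j - x j)‖ ^ 2 ≤ (∑ j, W i j * ‖xt j - x j‖) ^ 2 :=
              pow_le_pow_left₀ (norm_nonneg _) h1 2
          _ ≤ ∑ j, W i j * ‖xt j - x j‖ ^ 2 := h2
      calc ∑ i, ‖∑ j, W i j • (xt j - x j)‖ ^ 2
          ≤ ∑ i, ∑ j, W i j * ‖xt j - x j‖ ^ 2 := Finset.sum_le_sum fun i _ => hpoint i
        _ = ∑ j, (∑ i, W i j) * ‖xt j - x j‖ ^ 2 := by
            rw [Finset.sum_comm]
            exact Finset.sum_congr rfl fun j _ => (Finset.sum_mul _ _ _).symm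
        _ = ∑ j, ‖xt j - x j‖ ^ 2 := by
            refine Finset.sum_congr rfl fun j _ => ?_
            have hcol : ∑ i, W i j = 1 := by
              calc ∑ i, W i j = ∑ i, W j i := Finset.sum_congr rfl fun i _ => hsymm.apply j i
                _ = 1 := hrow j
            rw [hcol, one_mul]
    have hE2 : Ee ≤ 2 * γ * D + η * V := by
      have hsplit : e = fun i => γ • ((∑ j, W i j • (xt j - x j)) - (xt i - x i)) + η • v i := by
        funext i; exact he i
      rw [hEdef, hsplit]
      calc stackNorm (fun i => γ • ((∑ j, W i j • (xt j - x j)) - (xt i - x i)) + η • v i)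
          ≤ stackNorm (fun i => γ • ((∑ j, W i j • (xt j - x j)) - (xt i - x i)))
            + stackNorm (fun i => η • v i) := stackNorm_triangle _ _
        _ = γ * stackNorm (fun i => (∑ j, W i j • (xt j - x j)) - (xt i - x i)) + η * V := by
            rw [stackNorm_smul, stackNorm_smul, abs_of_nonneg hγ0.le, abs_of_nonneg hη]
        _ ≤ γ * (2 * D) + η * V := by
            have hu : stackNorm (fun i => (∑ j, W i j • (xt j - x j)) - (xt i - x i))
                ≤ 2 * D := by
              have hsplit2 : (fun i => (∑ j, W i j • (xt j - x j)) - (xt i - x i))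
                  = fun i => (∑ j, W i j • (xt j - x j)) + (-(xt i - x i)) := by
                funext i; abel
              rw [hsplit2]
              calc stackNorm (fun i => (∑ j, W i j • (xt j - x j)) + (-(xt i - x i)))
                  ≤ stackNorm (fun i => ∑ j, W i j • (xt j - x j))
                    + stackNorm (fun i => -(xt i - x i)) := stackNorm_triangle _ _
                _ ≤ D + D := by
                    refine add_le_add hWd (le_of_eq ?_)
                    rw [hDdef]
                    unfold stackNorm
                    simp only [norm_neg]
                _ = 2 * D := by ring
            have := mul_le_mul_of_nonneg_left hu hγ0.le
            linarith
        _ = 2 * γ * D + η * V := by ring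
    have hT2 : stackNorm (fun i => xnext i - q)
        ≤ (1 - ρhat) * s + (4 * γ * D + 2 * η * V) := by
      calc stackNorm (fun i => xnext i - q) ≤ (1 - ρhat) * s + 2 * Ee := hT
        _ ≤ (1 - ρhat) * s + (4 * γ * D + 2 * η * V) := by linarith
    exact num2 ρhat s D V _ γ η hρ0 hρ1 hT0 hT2
end
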